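/- arXiv:2511.08544 — 3 statements merged into one kernel-verified Lean document; each statement's English description precedes it below -/
import Mathlib

section
/- Isotropic Gaussian minimizes Fisher information under a trace constraint: fix t > 0 and let p range over all continuously differentiable, strictly positive probability densities on ℝ^d with mean zero, finite positive-definite covariance Σ satisfying tr(Σ) = t, square-integrable score (J(p) < ∞), and x_j p(x) → 0 as ‖x‖ → ∞ for each coordinate j. Then J(p) ≥ d²/t, and equality holds if and only if p is the density of the isotropic Gaussian N(0, (t/d) I_d). -/
open MeasureTheory Matrix BigOperators

/-- The density of the centered Gaussian `N(0, Σ)` on `ℝ^d`. -/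
noncomputable def gaussDensity {d : ℕ} (S : Matrix (Fin d) (Fin d) ℝ)
    (x : EuclideanSpace ℝ (Fin d)) : ℝ :=
  (2 * Real.pi) ^ (-(d : ℝ) / 2) * S.det ^ (-(1 : ℝ) / 2) *
    Real.exp (-(∑ i, ∑ j, x i * S⁻¹ i j * x j) / 2)

namespace FisherAuxABC

open Filter

noncomputable section

lemma euclid_norm_sq {d : ℕ} (x : EuclideanSpace ℝ (Fin d)) : ‖x‖ ^ 2 = ∑ i, x i ^ 2 := by
  rw [EuclideanSpace.norm_eq, Real.sq_sqrt (Finset.sum_nonneg fun i _ => sq_nonneg _)]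
  simp [sq_abs]

lemma abs_coord_le {d : ℕ} (x : EuclideanSpace ℝ (Fin d)) (j : Fin d) : |x j| ≤ ‖x‖ := by
  have h : x j ^ 2 ≤ ‖x‖ ^ 2 := by
    rw [euclid_norm_sq]
    exact Finset.single_le_sum (f := fun i => x i ^ 2) (fun i _ => sq_nonneg _) (Finset.mem_univ j)
  calc |x j| = Real.sqrt (x j ^ 2) := (Real.sqrt_sq_eq_abs _).symm
    _ ≤ Real.sqrt (‖x‖ ^ 2) := Real.sqrt_le_sqrt h
    _ = ‖x‖ := by rw [Real.sqrt_sq (norm_nonneg _)]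

lemma tendsto_cocompact_of_abs_le {E : Type*} [NormedAddCommGroup E] [ProperSpace E]
    {f : ℝ → E} (h : ∀ s, |s| ≤ ‖f s‖) :
    Tendsto f atTop (cocompact E) ∧ Tendsto f atBot (cocompact E) := by
  constructor <;> rw [hasBasis_cocompact.tendsto_right_iff] <;> intro K hK <;>
    obtain ⟨R, hR⟩ := hK.isBounded.subset_closedBall 0
  · filter_upwards [eventually_gt_atTop |R|] with s hs hmem
    have h1 : ‖f s‖ ≤ R := by simpa [dist_zero_right] using hR hmem
    have := h s
    have : |s| ≤ R := le_trans this h1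
    have := le_abs_self s
    have := le_abs_self R
    linarith [abs_nonneg s]
  · filter_upwards [eventually_lt_atBot (-|R|)] with s hs hmem
    have h1 : ‖f s‖ ≤ R := by simpa [dist_zero_right] using hR hmem
    have h2 : |s| ≤ R := le_trans (h s) h1
    have := neg_abs_le s
    have := le_abs_self R
    linarith

lemma ibp_1d (g g' : ℝ → ℝ) (hderiv : ∀ s, HasDerivAt g (g' s) s)
    (hg : Integrable g) (hg' : Integrable (fun s => s * g' s))
    (htop : Tendsto (fun s => s * g s) atTop (nhds 0))
    (hbot : Tendsto (fun s => s * g s) atBot (nhds 0)) :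
    ∫ s, s * g' s = - ∫ s, g s := by
  have H : ∀ s, HasDerivAt (fun u => u * g u) (g s + s * g' s) s := fun s => by
    simpa [add_comm, Pi.mul_def] using (hasDerivAt_id' (x := s)).mul (hderiv s)
  have hint : Integrable (fun s => g s + s * g' s) := hg.add hg'
  have h0 := integral_of_hasDerivAt_of_tendsto H hint hbot htop
  rw [integral_add hg hg'] at h0
  simp only [sub_zero] at h0
  linarith

def ψe {n : ℕ} (j : Fin (n+1)) : (ℝ × (Fin n → ℝ)) ≃ᵐ EuclideanSpace ℝ (Fin (n+1)) :=
  (MeasurableEquiv.piFinSuccAbove (fun _ : Fin (n+1) => ℝ) j).symm.trans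
    (MeasurableEquiv.toLp 2 (Fin (n+1) → ℝ))

lemma ψe_mp {n : ℕ} (j : Fin (n+1)) : MeasurePreserving (ψe j) volume volume :=
  ((EuclideanSpace.volume_preserving_symm_measurableEquiv_toLp _).symm).comp
    ((volume_preserving_piFinSuccAbove (fun _ : Fin (n+1) => ℝ) j).symm)

lemma ψe_apply_self {n : ℕ} (j : Fin (n+1)) (s : ℝ) (y : Fin n → ℝ) : (ψe j (s, y)) j = s := by
  show Fin.insertNth (α := fun _ => ℝ) j s y j = s
  simp

lemma ψe_affine {n : ℕ} (j : Fin (n+1)) (s : ℝ) (y : Fin n → ℝ) :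
    ψe j (s, y) = ψe j (0, y) + s • EuclideanSpace.single j (1:ℝ) := by
  ext k
  show Fin.insertNth (α := fun _ => ℝ) j s y k
      = Fin.insertNth (α := fun _ => ℝ) j 0 y k + s * EuclideanSpace.single j (1:ℝ) k
  refine Fin.succAboveCases j ?_ ?_ k
  · simp [EuclideanSpace.single_apply]
  · intro i
    simp [EuclideanSpace.single_apply, Fin.succAbove_ne j i]



lemma integral_coord_fderiv {n : ℕ} (p : EuclideanSpace ℝ (Fin (n+1)) → ℝ)
    (hsmooth : ContDiff ℝ 1 p) (hp : Integrable p) (j : Fin (n+1))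
    (hFint : Integrable (fun x : EuclideanSpace ℝ (Fin (n+1)) =>
      x j * fderiv ℝ p x (EuclideanSpace.single j 1)))
    (hdecay : Tendsto (fun x : EuclideanSpace ℝ (Fin (n+1)) => x j * p x)
      (cocompact _) (nhds 0)) :
    ∫ x, x j * fderiv ℝ p x (EuclideanSpace.single j 1) = - ∫ x, p x := by
  set F : EuclideanSpace ℝ (Fin (n+1)) → ℝ :=
    fun x => x j * fderiv ℝ p x (EuclideanSpace.single j 1) with hF
  have hdiff : Differentiable ℝ p := hsmooth.differentiable one_ne_zero
  have hψ := ψe_mp j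
  -- composed integrabilities, as integrable w.r.t. volume.prod volume
  have hpψ : Integrable (fun z : ℝ × (Fin n → ℝ) => p (ψe j z)) (volume.prod volume) := by
    rw [← Measure.volume_eq_prod]
    exact (hψ.integrable_comp_emb (ψe j).measurableEmbedding).mpr hp
  have hFψ : Integrable (fun z : ℝ × (Fin n → ℝ) => F (ψe j z)) (volume.prod volume) := by
    rw [← Measure.volume_eq_prod]
    exact (hψ.integrable_comp_emb (ψe j).measurableEmbedding).mpr hFint
  -- 1D derivative along slices
  have hsl : ∀ (y : Fin n → ℝ) (s : ℝ), HasDerivAt (fun s' => p (ψe j (s', y)))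
      (fderiv ℝ p (ψe j (s, y)) (EuclideanSpace.single j 1)) s := by
    intro y s
    have heq : (fun s' => p (ψe j (s', y)))
        = fun s' => p (ψe j (0, y) + s' • EuclideanSpace.single j (1:ℝ)) := by
      funext s'; rw [ψe_affine]
    rw [heq]
    have h1 : HasDerivAt (fun s' : ℝ => ψe j (0, y) + s' • EuclideanSpace.single j (1:ℝ))
        (EuclideanSpace.single j (1:ℝ)) s := by
      simpa using ((hasDerivAt_id s).smul_const (EuclideanSpace.single j (1:ℝ))).const_add
        (ψe j (0, y))
    have h2 := (hdiff (ψe j (s, y))).hasFDerivAt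
    rw [ψe_affine j s y] at h2
    have h3 := h2.comp_hasDerivAt s h1
    rw [← ψe_affine j s y] at h3
    simpa [Function.comp_def] using h3
  -- decay along slices
  have hdec : ∀ y : Fin n → ℝ,
      Tendsto (fun s => s * p (ψe j (s, y))) atTop (nhds 0) ∧
      Tendsto (fun s => s * p (ψe j (s, y))) atBot (nhds 0) := by
    intro y
    have hb : ∀ s : ℝ, |s| ≤ ‖ψe j (s, y)‖ := by
      intro s
      have := abs_coord_le (ψe j (s, y)) j
      rwa [ψe_apply_self] at this
    obtain ⟨h1, h2⟩ := tendsto_cocompact_of_abs_le hb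
    constructor
    · have := hdecay.comp h1
      simpa [Function.comp_def, ψe_apply_self] using this
    · have := hdecay.comp h2
      simpa [Function.comp_def, ψe_apply_self] using this
  -- a.e. slice integrabilities
  have hae1 := hpψ.prod_left_ae
  have hae2 := hFψ.prod_left_ae
  have key : ∀ᵐ y : Fin n → ℝ,
      (∫ s, F (ψe j (s, y))) = - ∫ s, p (ψe j (s, y)) := by
    filter_upwards [hae1, hae2] with y h1 h2
    have hFeq : (fun s => F (ψe j (s, y)))
        = fun s => s * fderiv ℝ p (ψe j (s, y)) (EuclideanSpace.single j 1) := by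
      funext s; rw [hF]; simp only [ψe_apply_self]
    rw [hFeq]
    refine ibp_1d _ _ (hsl y) h1 ?_ ?_ ?_
    · rw [hFeq] at h2; exact h2
    · exact (hdec y).1
    · exact (hdec y).2
  calc ∫ x, F x = ∫ z, F (ψe j z) := (hψ.integral_comp (ψe j).measurableEmbedding F).symm
    _ = ∫ y, ∫ s, F (ψe j (s, y)) := by
        rw [Measure.volume_eq_prod]
        exact integral_prod_symm _ hFψ
    _ = ∫ y, - ∫ s, p (ψe j (s, y)) := integral_congr_ae key
    _ = - ∫ y, ∫ s, p (ψe j (s, y)) := integral_neg _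
    _ = - ∫ z, p (ψe j z) := by
        rw [Measure.volume_eq_prod]
        rw [integral_prod_symm _ hpψ]
    _ = - ∫ x, p x := by rw [hψ.integral_comp (ψe j).measurableEmbedding p]

lemma gauss_form {d : ℕ} (hd : 0 < d) {t : ℝ} (ht : 0 < t) (x : EuclideanSpace ℝ (Fin d)) :
    gaussDensity ((t / d) • (1 : Matrix (Fin d) (Fin d) ℝ)) x
      = (2 * Real.pi * (t / d)) ^ (-(d : ℝ) / 2)
        * Real.exp (-((d : ℝ) / t * ‖x‖ ^ 2) / 2) := by
  have hd0 : (0:ℝ) < d := by exact_mod_cast hd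
  have htd : (0:ℝ) < t / d := by positivity
  have hinv : ((t / d) • (1 : Matrix (Fin d) (Fin d) ℝ))⁻¹
      = ((d : ℝ) / t) • (1 : Matrix (Fin d) (Fin d) ℝ) := by
    apply Matrix.inv_eq_right_inv
    rw [Matrix.smul_mul, Matrix.mul_smul, Matrix.one_mul, smul_smul]
    have h1 : t / (d:ℝ) * ((d:ℝ) / t) = 1 := by field_simp
    rw [h1, one_smul]
  have hdet : ((t / d) • (1 : Matrix (Fin d) (Fin d) ℝ)).det = (t/d)^d := by
    rw [Matrix.det_smul, Matrix.det_one, mul_one, Fintype.card_fin]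
  have hq : ∑ i, ∑ j, x i * (((t/d) • (1 : Matrix (Fin d) (Fin d) ℝ))⁻¹) i j * x j
      = (d:ℝ)/t * ‖x‖^2 := by
    rw [hinv, euclid_norm_sq, Finset.mul_sum]
    refine Finset.sum_congr rfl fun i _ => ?_
    have : ∀ j, x i * (((d : ℝ) / t) • (1 : Matrix (Fin d) (Fin d) ℝ)) i j * x j
        = if i = j then x i * ((d:ℝ)/t) * x j else 0 := by
      intro j
      by_cases h : i = j <;> simp [Matrix.smul_apply, Matrix.one_apply, h]
    rw [Finset.sum_congr rfl fun j _ => this j, Finset.sum_ite_eq (Finset.univ) i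
      (fun j => x i * ((d:ℝ)/t) * x j)]
    simp; ring
  rw [gaussDensity, hdet, hq]
  congr 1
  rw [Real.mul_rpow (by positivity : (0:ℝ) ≤ 2*Real.pi) htd.le]
  congr 1
  rw [← Real.rpow_natCast (t/d) d, ← Real.rpow_mul htd.le]
  congr 1
  ring

lemma euclid_sum_single {d : ℕ} (x : EuclideanSpace ℝ (Fin d)) :
    x = ∑ j, x j • EuclideanSpace.single j (1:ℝ) := by
  ext k
  rw [show (∑ j, x j • EuclideanSpace.single j (1:ℝ)) k
      = ∑ j, (x j • EuclideanSpace.single j (1:ℝ)) k from by rw [WithLp.ofLp_sum]; exact Finset.sum_apply k Finset.univ _]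
  simp [EuclideanSpace.single_apply]

end

end FisherAuxABC

open FisherAuxABC Filter InnerProductSpace RealInnerProductSpace

set_option maxHeartbeats 3000000 in
/-- **Isotropic Gaussian minimizes Fisher information under a trace constraint.**
For any `C¹`, strictly positive, mean-zero probability density `p` on `ℝ^d` with
positive-definite covariance `Σ` of trace `t`, square-integrable score, and decay
`xⱼ p(x) → 0` at infinity, one has `J(p) ≥ d²/t`, with equality iff `p` is the
density of `N(0, (t/d) I_d)`. -/
theorem fisher_information_min_trace_constraint
    {d : ℕ} (hd : 0 < d) (t : ℝ) (ht : 0 < t)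
    (p : EuclideanSpace ℝ (Fin d) → ℝ)
    (hsmooth : ContDiff ℝ 1 p) (hpos : ∀ x, 0 < p x)
    (hprob : (∫ x, p x) = 1)
    (S : Matrix (Fin d) (Fin d) ℝ) (hS : S.PosDef)
    (hmean : ∀ i, (∫ x : EuclideanSpace ℝ (Fin d), x i * p x) = 0)
    (hmeanInt : ∀ i, Integrable (fun x : EuclideanSpace ℝ (Fin d) => x i * p x))
    (hcov : ∀ i j, (∫ x : EuclideanSpace ℝ (Fin d), x i * x j * p x) = S i j)
    (hcovInt : ∀ i j, Integrable (fun x : EuclideanSpace ℝ (Fin d) => x i * x j * p x))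
    (htr : S.trace = t)
    (hJ : Integrable (fun x : EuclideanSpace ℝ (Fin d) =>
      ‖gradient (fun y => Real.log (p y)) x‖ ^ 2 * p x))
    (hdecay : ∀ j, Filter.Tendsto (fun x : EuclideanSpace ℝ (Fin d) => x j * p x)
      (Filter.cocompact _) (nhds 0)) :
    (∫ x, ‖gradient (fun y => Real.log (p y)) x‖ ^ 2 * p x) ≥ (d : ℝ) ^ 2 / t ∧
      ((∫ x, ‖gradient (fun y => Real.log (p y)) x‖ ^ 2 * p x) = (d : ℝ) ^ 2 / t ↔
        p = gaussDensity ((t / d) • (1 : Matrix (Fin d) (Fin d) ℝ))) := by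
  obtain ⟨n, rfl⟩ : ∃ n, d = n + 1 := ⟨d - 1, (Nat.succ_pred_eq_of_pos hd).symm⟩
  clear hmean hmeanInt hS
  set u : EuclideanSpace ℝ (Fin (n+1)) → EuclideanSpace ℝ (Fin (n+1)) := gradient (fun y => Real.log (p y)) with hu
  set N : ℝ := ((n + 1 : ℕ) : ℝ) with hN
  have hN0 : 0 < N := by rw [hN]; positivity
  set c : ℝ := N / t with hc
  have hc0 : 0 < c := by rw [hc]; positivity
  have hdiff : Differentiable ℝ p := hsmooth.differentiable one_ne_zero
  have hpc : Continuous p := hsmooth.continuous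
  have hDc : Continuous (fderiv ℝ p) := hsmooth.continuous_fderiv one_ne_zero
  have hgrad : ∀ x, u x = (toDual ℝ (EuclideanSpace ℝ (Fin (n+1)))).symm ((p x)⁻¹ • fderiv ℝ p x) := by
    intro x
    rw [hu]
    exact (hasFDerivAt_iff_hasGradientAt.mp
      (((hdiff x).hasFDerivAt).log (hpos x).ne')).gradient
  have hinner : ∀ x v, ⟪u x, v⟫_ℝ = (p x)⁻¹ * fderiv ℝ p x v := by
    intro x v
    rw [hgrad x, toDual_symm_apply]
    simp
  have hDval : ∀ x v, fderiv ℝ p x v = p x * ⟪u x, v⟫_ℝ := by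
    intro x v
    rw [hinner x v]
    field_simp [(hpos x).ne']
  have huc : Continuous u := by
    have he : u = fun x => (toDual ℝ (EuclideanSpace ℝ (Fin (n+1)))).symm ((p x)⁻¹ • fderiv ℝ p x) := funext hgrad
    rw [he]
    exact (LinearIsometryEquiv.continuous _).comp
      ((hpc.inv₀ fun x => (hpos x).ne').smul hDc)
  have hpint : Integrable p := integrable_of_integral_eq_one hprob
  -- coordinate square integrability
  have hsq_int : ∀ j : Fin (n+1), Integrable (fun x : EuclideanSpace ℝ (Fin (n+1)) => x j ^ 2 * p x) := by
    intro j
    have he : (fun x : EuclideanSpace ℝ (Fin (n+1)) => x j ^ 2 * p x) = fun x : EuclideanSpace ℝ (Fin (n+1)) => x j * x j * p x := by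
      funext x; ring
    rw [he]; exact hcovInt j j
  -- integrability of F j
  have hFj_int : ∀ j : Fin (n+1),
      Integrable (fun x : EuclideanSpace ℝ (Fin (n+1)) => x j * fderiv ℝ p x (EuclideanSpace.single j 1)) := by
    intro j
    have hbound : Integrable (fun x : EuclideanSpace ℝ (Fin (n+1)) =>
        (x j ^ 2 * p x + ‖u x‖ ^ 2 * p x) / 2) := ((hsq_int j).add hJ).div_const 2
    refine Integrable.mono' hbound ?_ (Filter.Eventually.of_forall fun x => ?_)
    · refine Continuous.aestronglyMeasurable ?_
      exact ((EuclideanSpace.proj (𝕜 := ℝ) j).continuous.mul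
        (((ContinuousLinearMap.apply ℝ ℝ (EuclideanSpace.single j (1:ℝ))).continuous).comp hDc))
    · have h1 : |fderiv ℝ p x (EuclideanSpace.single j 1)| ≤ p x * ‖u x‖ := by
        rw [hDval]
        rw [abs_mul, abs_of_pos (hpos x)]
        refine mul_le_mul_of_nonneg_left ?_ (hpos x).le
        calc |⟪u x, EuclideanSpace.single j (1:ℝ)⟫_ℝ|
            ≤ ‖u x‖ * ‖EuclideanSpace.single j (1:ℝ)‖ := abs_real_inner_le_norm _ _
          _ = ‖u x‖ := by rw [EuclideanSpace.norm_single]; simp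
      rw [Real.norm_eq_abs, abs_mul]
      calc |x j| * |fderiv ℝ p x (EuclideanSpace.single j 1)|
          ≤ |x j| * (p x * ‖u x‖) :=
            mul_le_mul_of_nonneg_left h1 (abs_nonneg _)
        _ ≤ (x j ^ 2 * p x + ‖u x‖ ^ 2 * p x) / 2 := by
            nlinarith [sq_nonneg (|x j| - ‖u x‖), (hpos x).le, abs_nonneg (x j),
              norm_nonneg (u x), sq_abs (x j)]
  -- value of coordinate integrals
  have hFj_val : ∀ j : Fin (n+1),
      (∫ x : EuclideanSpace ℝ (Fin (n+1)), x j * fderiv ℝ p x (EuclideanSpace.single j 1)) = -1 := by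
    intro j
    rw [integral_coord_fderiv p hsmooth hpint j (hFj_int j) (hdecay j), hprob]
  -- decomposition of fderiv p x x
  have hdecomp : (fun x : EuclideanSpace ℝ (Fin (n+1)) => fderiv ℝ p x x)
      = fun x : EuclideanSpace ℝ (Fin (n+1)) => ∑ j, x j * fderiv ℝ p x (EuclideanSpace.single j 1) := by
    funext x
    conv_lhs => rw [show (fderiv ℝ p x) x
      = (fderiv ℝ p x) (∑ j, x j • EuclideanSpace.single j (1:ℝ)) from by
        rw [← euclid_sum_single x]]
    rw [map_sum]
    exact Finset.sum_congr rfl fun j _ => by rw [ContinuousLinearMap.map_smul]; simp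
  have hI2 : Integrable (fun x : EuclideanSpace ℝ (Fin (n+1)) => fderiv ℝ p x x) := by
    rw [hdecomp]
    exact integrable_finset_sum _ fun j _ => hFj_int j
  have hI2val : (∫ x : EuclideanSpace ℝ (Fin (n+1)), fderiv ℝ p x x) = -N := by
    rw [hdecomp, integral_finset_sum _ fun j _ => hFj_int j]
    simp only [hFj_val]
    simp [hN]
  -- second moment
  have h3eq : (fun x : EuclideanSpace ℝ (Fin (n+1)) => ‖x‖ ^ 2 * p x) = fun x : EuclideanSpace ℝ (Fin (n+1)) => ∑ j, x j * x j * p x := by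
    funext x
    rw [euclid_norm_sq, Finset.sum_mul]
    exact Finset.sum_congr rfl fun j _ => by ring
  have hI3 : Integrable (fun x : EuclideanSpace ℝ (Fin (n+1)) => ‖x‖ ^ 2 * p x) := by
    rw [h3eq]; exact integrable_finset_sum _ fun j _ => hcovInt j j
  have hI3val : (∫ x : EuclideanSpace ℝ (Fin (n+1)), ‖x‖ ^ 2 * p x) = t := by
    rw [h3eq, integral_finset_sum _ fun j _ => hcovInt j j]
    have : ∀ j : Fin (n+1), (∫ x : EuclideanSpace ℝ (Fin (n+1)), x j * x j * p x) = S j j := fun j => hcov j j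
    rw [Finset.sum_congr rfl fun j _ => this j]
    rw [← htr]
    simp [Matrix.trace, Matrix.diag]
  -- expansion
  have hWexp : (fun x : EuclideanSpace ℝ (Fin (n+1)) => ‖u x + c • x‖ ^ 2 * p x)
      = fun x : EuclideanSpace ℝ (Fin (n+1)) => ‖u x‖ ^ 2 * p x + (2 * c) * fderiv ℝ p x x
          + c ^ 2 * (‖x‖ ^ 2 * p x) := by
    funext x
    rw [hDval x x, norm_add_sq_real, real_inner_smul_right, norm_smul]
    rw [Real.norm_eq_abs, mul_pow, sq_abs]
    ring
  have hWint : Integrable (fun x : EuclideanSpace ℝ (Fin (n+1)) => ‖u x + c • x‖ ^ 2 * p x) := by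
    rw [hWexp]
    exact (hJ.add (hI2.const_mul _)).add (hI3.const_mul _)
  have hexp : (∫ x : EuclideanSpace ℝ (Fin (n+1)), ‖u x + c • x‖ ^ 2 * p x)
      = (∫ x : EuclideanSpace ℝ (Fin (n+1)), ‖u x‖ ^ 2 * p x) - N ^ 2 / t := by
    rw [hWexp]
    have h12 : Integrable (fun x : EuclideanSpace ℝ (Fin (n+1)) =>
        ‖u x‖ ^ 2 * p x + (2 * c) * fderiv ℝ p x x) := hJ.add (hI2.const_mul _)
    have h3' : Integrable (fun x : EuclideanSpace ℝ (Fin (n+1)) =>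
        c ^ 2 * (‖x‖ ^ 2 * p x)) := hI3.const_mul _
    have h2' : Integrable (fun x : EuclideanSpace ℝ (Fin (n+1)) =>
        (2 * c) * fderiv ℝ p x x) := hI2.const_mul _
    rw [integral_add h12 h3', integral_add hJ h2', integral_const_mul, integral_const_mul,
      hI2val, hI3val]
    rw [hc]
    field_simp
    ring
  have hWnn : (0:ℝ) ≤ ∫ x : EuclideanSpace ℝ (Fin (n+1)), ‖u x + c • x‖ ^ 2 * p x :=
    integral_nonneg fun x => mul_nonneg (sq_nonneg _) (hpos x).le
  have hNgoal : ((n + 1 : ℕ) : ℝ) ^ 2 / t = N ^ 2 / t := by rw [hN]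
  constructor
  · rw [ge_iff_le, hNgoal]
    linarith [hexp, hWnn]
  constructor
  · -- equality → gaussian
    intro hJeq
    rw [hNgoal] at hJeq
    have h0 : (∫ x : EuclideanSpace ℝ (Fin (n+1)), ‖u x + c • x‖ ^ 2 * p x) = 0 := by rw [hexp, hJeq]; ring
    have hWc : Continuous (fun x : EuclideanSpace ℝ (Fin (n+1)) => ‖u x + c • x‖ ^ 2 * p x) :=
      (((huc.add (continuous_id.const_smul c)).norm.pow 2)).mul hpc
    have hW0 : ∀ x : EuclideanSpace ℝ (Fin (n+1)), ‖u x + c • x‖ ^ 2 * p x = 0 := by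
      have hae := (integral_eq_zero_iff_of_nonneg
        (fun x => mul_nonneg (sq_nonneg _) (hpos x).le) hWint).mp h0
      have := (hWc.ae_eq_iff_eq volume continuous_const).mp hae
      intro x; exact congrFun this x
    have huval : ∀ x : EuclideanSpace ℝ (Fin (n+1)), u x = -(c • x) := by
      intro x
      have h1 := hW0 x
      have h2 : ‖u x + c • x‖ ^ 2 = 0 := by
        rcases mul_eq_zero.mp h1 with h | h
        · exact h
        · exact absurd h (hpos x).ne'
      have h3 : u x + c • x = 0 := by
        rwa [pow_eq_zero_iff (two_ne_zero), norm_eq_zero] at h2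
      exact eq_neg_of_add_eq_zero_left h3
    -- ray ODE
    have hray : ∀ x : EuclideanSpace ℝ (Fin (n+1)), p x = p 0 * Real.exp (-(c * ‖x‖ ^ 2) / 2) := by
      intro x
      have hc' : ∀ s : ℝ, HasDerivAt
          (fun s' : ℝ => p (s' • x) * Real.exp ((c * ‖x‖ ^ 2 / 2) * s' ^ 2)) 0 s := by
        intro s
        have h1 : HasDerivAt (fun s' : ℝ => s' • x) x s := by
          simpa using (hasDerivAt_id s).smul_const x
        have h2 : HasDerivAt (fun s' : ℝ => p (s' • x)) (fderiv ℝ p (s • x) x) s := by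
          simpa [Function.comp_def] using ((hdiff (s • x)).hasFDerivAt).comp_hasDerivAt s h1
        have h3 : HasDerivAt (fun s' : ℝ => Real.exp ((c * ‖x‖ ^ 2 / 2) * s' ^ 2))
            (Real.exp ((c * ‖x‖ ^ 2 / 2) * s ^ 2) * ((c * ‖x‖ ^ 2 / 2) * (2 * s))) s := by
          have := (((hasDerivAt_pow 2 s).const_mul (c * ‖x‖ ^ 2 / 2))).exp
          simpa using this
        have hDv : fderiv ℝ p (s • x) x = -(c * s * ‖x‖ ^ 2) * p (s • x) := by
          rw [hDval (s • x) x, huval (s • x)]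
          rw [inner_neg_left, real_inner_smul_left, real_inner_smul_left,
            real_inner_self_eq_norm_sq]
          ring
        have h4 := h2.mul h3
        rw [Pi.mul_def] at h4
        rw [hDv] at h4
        exact h4.congr_deriv (by ring)
      have hdiff' : Differentiable ℝ
          (fun s' : ℝ => p (s' • x) * Real.exp ((c * ‖x‖ ^ 2 / 2) * s' ^ 2)) :=
        fun s => (hc' s).differentiableAt
      have h01 := is_const_of_deriv_eq_zero hdiff' (fun s => (hc' s).deriv) 1 0
      norm_num [one_smul, zero_smul] at h01
      have hepos := Real.exp_pos (c * ‖x‖ ^ 2 / 2)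
      have hexp_eq : Real.exp (-(c * ‖x‖ ^ 2) / 2) = (Real.exp (c * ‖x‖ ^ 2 / 2))⁻¹ := by
        rw [← Real.exp_neg]; ring_nf
      rw [hexp_eq]
      field_simp
      linear_combination h01
    -- normalization
    have hp0 : p 0 = (2 * Real.pi * (t / N)) ^ (-(N : ℝ) / 2) := by
      have hint0 : (fun x : EuclideanSpace ℝ (Fin (n+1)) => p x) = fun x : EuclideanSpace ℝ (Fin (n+1)) => p 0 * Real.exp (-(c / 2) * ‖x‖ ^ 2) := by
        funext x
        rw [hray x]
        congr 1
        ring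
      rw [hint0] at hprob
      rw [integral_const_mul] at hprob
      rw [GaussianFourier.integral_rexp_neg_mul_sq_norm (by positivity : (0:ℝ) < c / 2)]
        at hprob
      have hfr : (Module.finrank ℝ (EuclideanSpace ℝ (Fin (n+1))) : ℝ) = N := by
        rw [finrank_euclideanSpace_fin, hN]
      rw [hfr] at hprob
      have hbase : Real.pi / (c / 2) = 2 * Real.pi * (t / N) := by
        rw [hc]; field_simp
      rw [hbase] at hprob
      have hbpos : (0:ℝ) < 2 * Real.pi * (t / N) := by positivity
      rw [show -(N : ℝ) / 2 = -(N / 2) from by ring, Real.rpow_neg hbpos.le]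
      field_simp at hprob ⊢
      linarith [hprob]
    funext x
    rw [gauss_form hd ht x, hray x, hp0, ← hN]
  · -- gaussian → equality
    intro hpe
    have hbpos2 : (0:ℝ) < 2 * Real.pi * (t / N) := by
      have h1 := Real.pi_pos
      have h2 := div_pos ht hN0
      nlinarith
    set K : ℝ := (2 * Real.pi * (t / N)) ^ (-(N : ℝ) / 2) with hK
    have hKpos : 0 < K := Real.rpow_pos_of_pos hbpos2 _
    have hpt : ∀ x : EuclideanSpace ℝ (Fin (n+1)),
        p x = K * Real.exp (-((N / t) * ‖x‖ ^ 2) / 2) := by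
      intro x
      rw [hpe, gauss_form hd ht x, ← hN]
    have hfun : (fun y : EuclideanSpace ℝ (Fin (n+1)) => Real.log (p y))
        = fun y => Real.log K + (-(N / t) / 2) * ⟪y, y⟫_ℝ := by
      funext y
      rw [hpt y, Real.log_mul hKpos.ne' (Real.exp_ne_zero _), Real.log_exp,
        ← real_inner_self_eq_norm_sq]
      ring
    have hueq : ∀ x : EuclideanSpace ℝ (Fin (n+1)), u x = -(c • x) := by
      intro x
      have hq := (hasFDerivAt_id x).inner ℝ (hasFDerivAt_id x)
      have hq2 := (hq.const_mul (-(N / t) / 2)).const_add (Real.log K)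
      have hg := hasFDerivAt_iff_hasGradientAt.mp hq2
      have he : u x = (toDual ℝ (EuclideanSpace ℝ (Fin (n+1)))).symm
          ((-(N / t) / 2) • ((fderivInnerCLM ℝ (x, x)).comp
            ((ContinuousLinearMap.id ℝ _).prod (ContinuousLinearMap.id ℝ _)))) := by
        rw [hu, hfun]
        exact hg.gradient
      rw [he]
      apply ext_inner_right ℝ
      intro v
      rw [toDual_symm_apply]
      rw [inner_neg_left, real_inner_smul_left]
      simp only [ContinuousLinearMap.smul_apply, ContinuousLinearMap.coe_comp',
        Function.comp_apply, ContinuousLinearMap.prod_apply, ContinuousLinearMap.coe_id',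
        id_eq, fderivInnerCLM_apply, smul_eq_mul]
      rw [real_inner_comm v x, hc]
      ring
    have hJcomp : (fun x : EuclideanSpace ℝ (Fin (n+1)) => ‖u x‖ ^ 2 * p x)
        = fun x : EuclideanSpace ℝ (Fin (n+1)) => c ^ 2 * (‖x‖ ^ 2 * p x) := by
      funext x
      rw [hueq x, norm_neg, norm_smul, Real.norm_eq_abs, mul_pow, sq_abs]
      ring
    rw [hNgoal, hJcomp, integral_const_mul, hI3val, hc]
    field_simp
end

section
/- Pointwise bias of the radius-based ball-average (radial k-NN) regressor: let p : ℝ^d → ℝ be a three-times continuously differentiable probability density with bounded derivatives up to order 3, and let η : ℝ^d → ℝ be twice continuously differentiable with bounded derivatives up to order 2. Fix x ∈ ℝ^d with p(x) > 0 and set, for r > 0, 𝒩(r) = ∫_{B(x,r)} η(y) p(y) dy and 𝒟(r) = ∫_{B(x,r)} p(y) dy, where B(x,r) is the closed Euclidean ball of radius r centered at x. Then lim_{r → 0⁺} r^{−2} ( 𝒩(r)/𝒟(r) − η(x) ) = (1/(d+2)) ( ⟨∇η(x), ∇p(x)⟩ / p(x) + (1/2) Δη(x) ); i.e., the ball-average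 estimator's asymptotic bias is (r²/(d+2)) ( ∇η(x)·∇ log p(x) + Δη(x)/2 ) + o(r²). -/
set_option maxHeartbeats 1000000

open MeasureTheory Filter BigOperators
open Metric

/-- The Laplacian of `f : ℝ^d → ℝ`, as the sum of second derivatives along the
standard coordinate directions. -/
noncomputable def lapl {d : ℕ} (f : EuclideanSpace ℝ (Fin d) → ℝ)
    (x : EuclideanSpace ℝ (Fin d)) : ℝ :=
  ∑ i, fderiv ℝ (fun y => fderiv ℝ f y (EuclideanSpace.single i 1)) x
      (EuclideanSpace.single i 1)

section Aux

variable {d : ℕ}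
local notation "E" => EuclideanSpace ℝ (Fin d)

lemma integral_norm_sq_closedBall (hd : 0 < d) {r : ℝ} (hr : 0 < r) :
    ∫ z in closedBall (0 : EuclideanSpace ℝ (Fin d)) r, ‖z‖^2
    = (d : ℝ)/((d:ℝ)+2) * r^2 *
      (volume (closedBall (0 : EuclideanSpace ℝ (Fin d)) r)).toReal := by
  haveI : Nonempty (Fin d) := ⟨⟨0, hd⟩⟩
  haveI : Nontrivial (EuclideanSpace ℝ (Fin d)) := by infer_instance
  set EE := EuclideanSpace ℝ (Fin d) with hE
  have hdim : Module.finrank ℝ EE = d := finrank_euclideanSpace_fin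
  have h1 : ∫ z in closedBall (0 : EE) r, ‖z‖^2
      = ∫ z : EE, (fun t : ℝ => if t ≤ r then t^2 else 0) ‖z‖ := by
    rw [← MeasureTheory.integral_indicator measurableSet_closedBall]
    congr 1
    ext z
    simp [Set.indicator, mem_closedBall, dist_zero_right]
  have hrad : ∫ y in Set.Ioi (0:ℝ), y ^ (d - 1) • (if y ≤ r then y^2 else 0)
      = r^(d+2)/((d:ℝ)+2) := by
    have h1' : ∀ y ∈ Set.Ioi (0:ℝ), y ^ (d - 1) • (if y ≤ r then y^2 else 0)
        = (Set.Iic r).indicator (fun y => y ^ (d+1)) y := by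
      intro y hy
      simp only [Set.indicator, Set.mem_Iic, smul_eq_mul]
      split_ifs with h
      · rw [← pow_add]; congr 1; omega
      · ring
    rw [MeasureTheory.setIntegral_congr_fun measurableSet_Ioi h1',
      MeasureTheory.setIntegral_indicator measurableSet_Iic]
    have h2 : Set.Ioi (0:ℝ) ∩ Set.Iic r = Set.Ioc 0 r := by
      ext y; simp [Set.mem_Ioc, and_comm]
    rw [h2, ← intervalIntegral.integral_of_le hr.le, integral_pow]
    norm_num; ring
  rw [h1, MeasureTheory.integral_fun_norm_addHaar volume
    (fun t : ℝ => if t ≤ r then t^2 else 0)]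
  rw [hdim, hrad, Measure.addHaar_closedBall volume 0 hr.le, hdim]
  rw [ENNReal.toReal_mul, ENNReal.toReal_ofReal (by positivity)]
  rw [nsmul_eq_mul, smul_eq_mul]
  have hd2 : ((d:ℝ)+2) ≠ 0 := by positivity
  field_simp
  rw [measureReal_def]
  ring

lemma setIntegral_comp_isometry (f : EuclideanSpace ℝ (Fin d) ≃ₗᵢ[ℝ] EuclideanSpace ℝ (Fin d))
    (g : EuclideanSpace ℝ (Fin d) → ℝ) (r : ℝ) :
    ∫ z in closedBall (0 : EuclideanSpace ℝ (Fin d)) r, g (f z)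
      = ∫ z in closedBall (0 : EuclideanSpace ℝ (Fin d)) r, g z := by
  have hpre : f ⁻¹' (closedBall (0 : EuclideanSpace ℝ (Fin d)) r)
      = closedBall (0 : EuclideanSpace ℝ (Fin d)) r := by
    ext z
    simp only [Set.mem_preimage, mem_closedBall, dist_zero_right]
    rw [f.norm_map]
  conv_lhs => rw [← hpre]
  exact (f.measurePreserving).setIntegral_preimage_emb
    f.toHomeomorph.measurableEmbedding g _

lemma cross_moment_zero {r : ℝ} (i j : Fin d) (h : i ≠ j) :
    ∫ z in closedBall (0 : EuclideanSpace ℝ (Fin d)) r, (z i) * (z j) = 0 := by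
  classical
  set e : EuclideanSpace ℝ (Fin d) ≃ₗᵢ[ℝ] EuclideanSpace ℝ (Fin d) :=
    LinearIsometryEquiv.piLpCongrRight 2
      (fun k => if k = i then LinearIsometryEquiv.neg ℝ else LinearIsometryEquiv.refl ℝ ℝ) with he
  have happ : ∀ (z : EuclideanSpace ℝ (Fin d)) (k : Fin d),
      (e z) k = if k = i then -(z k) else z k := by
    intro z k
    rw [he, LinearIsometryEquiv.piLpCongrRight_apply]
    split_ifs with hk
    · subst hk; simp
    · simp [hk]
  have key := setIntegral_comp_isometry e (fun z => (z i) * (z j)) r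
  simp only [happ] at key
  norm_num [Ne.symm h] at key
  rw [integral_neg] at key
  linarith

lemma diag_moment_eq {r : ℝ} (i j : Fin d) :
    ∫ z in closedBall (0 : EuclideanSpace ℝ (Fin d)) r, (z i)^2
      = ∫ z in closedBall (0 : EuclideanSpace ℝ (Fin d)) r, (z j)^2 := by
  classical
  set e : EuclideanSpace ℝ (Fin d) ≃ₗᵢ[ℝ] EuclideanSpace ℝ (Fin d) :=
    LinearIsometryEquiv.piLpCongrLeft 2 ℝ ℝ (Equiv.swap i j) with he
  have happ : ∀ (z : EuclideanSpace ℝ (Fin d)),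
      (e z) i = z j := by
    intro z
    rw [he, LinearIsometryEquiv.piLpCongrLeft_apply]
    simp only [Equiv.piCongrLeft'_apply, Equiv.symm_symm, Equiv.symm_swap]
    simp [Equiv.swap_apply_left]
  have key := setIntegral_comp_isometry e (fun z => (z i)^2) r
  simp only [happ] at key
  exact key.symm

lemma diag_moment_value (hd : 0 < d) {r : ℝ} (hr : 0 < r) (i : Fin d) :
    ∫ z in closedBall (0 : E) r, (z i)^2
      = r^2/((d:ℝ)+2) * (volume (closedBall (0 : E) r)).toReal := by
  have hnorm := integral_norm_sq_closedBall hd hr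
  have hsum : ∑ j : Fin d, ∫ z in closedBall (0 : E) r, (z j)^2
      = ∫ z in closedBall (0 : E) r, ‖z‖^2 := by
    rw [← MeasureTheory.integral_finset_sum]
    · congr 1; ext z
      rw [EuclideanSpace.norm_eq, Real.sq_sqrt (by positivity)]
      simp [sq_abs]
    · intro j _
      exact (((EuclideanSpace.proj j : E →L[ℝ] ℝ).continuous).pow 2).continuousOn.integrableOn_compact
        (isCompact_closedBall _ _)
  have hconst : ∑ j : Fin d, ∫ z in closedBall (0 : E) r, (z j)^2
      = d * ∫ z in closedBall (0 : E) r, (z i)^2 := by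
    rw [Finset.sum_congr rfl (fun j _ => diag_moment_eq j i)]
    simp [Finset.sum_const, nsmul_eq_mul]
  have hd' : (d:ℝ) ≠ 0 := Nat.cast_ne_zero.2 hd.ne'
  have hkey := hconst.symm.trans (hsum.trans hnorm)
  field_simp at hkey ⊢
  apply mul_left_cancel₀ hd'
  rw [hkey]

lemma integral_linear_zero (L : E →L[ℝ] ℝ) (r : ℝ) :
    ∫ z in closedBall (0 : E) r, L z = 0 := by
  have key := setIntegral_comp_isometry (LinearIsometryEquiv.neg ℝ) (fun z => L z) r
  simp only [LinearIsometryEquiv.coe_neg, map_neg] at key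
  rw [integral_neg] at key
  linarith

lemma sum_single_eq (z : E) : ∑ i, z i • EuclideanSpace.single i (1:ℝ) = z := by
  have := (EuclideanSpace.basisFun (Fin d) ℝ).sum_repr z
  simpa [EuclideanSpace.basisFun_apply, EuclideanSpace.basisFun_repr] using this

lemma integral_bilin (hd : 0 < d) {r : ℝ} (hr : 0 < r) (B : E →L[ℝ] E →L[ℝ] ℝ) :
    ∫ z in closedBall (0 : E) r, B z z
      = (∑ i, B (EuclideanSpace.single i 1) (EuclideanSpace.single i 1))
        * (r^2/((d:ℝ)+2) * (volume (closedBall (0 : E) r)).toReal) := by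
  have hpt : ∀ z : E, B z z = ∑ i, ∑ j, B (EuclideanSpace.single i 1)
      (EuclideanSpace.single j 1) * (z i * z j) := by
    intro z
    have hBu : B z = ∑ i, z i • B (EuclideanSpace.single i 1) := by
      conv_lhs => rw [← sum_single_eq z]
      rw [map_sum]
      refine Finset.sum_congr rfl fun i _ => ?_
      rw [_root_.map_smul]
    rw [hBu, ContinuousLinearMap.sum_apply]
    refine Finset.sum_congr rfl fun i _ => ?_
    rw [ContinuousLinearMap.smul_apply]
    have hrow : (B (EuclideanSpace.single i 1)) z
        = ∑ j, z j * B (EuclideanSpace.single i 1) (EuclideanSpace.single j 1) := by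
      conv_lhs => rw [← sum_single_eq z]
      rw [map_sum]
      refine Finset.sum_congr rfl fun j _ => ?_
      rw [_root_.map_smul]
      simp [smul_eq_mul]
    rw [hrow, smul_eq_mul, Finset.mul_sum]
    refine Finset.sum_congr rfl fun j _ => ?_
    ring
  have hint : ∀ (i j : Fin d), IntegrableOn
      (fun z : E => B (EuclideanSpace.single i 1) (EuclideanSpace.single j 1) * (z i * z j))
      (closedBall (0 : E) r) volume := by
    intro i j
    apply ContinuousOn.integrableOn_compact (isCompact_closedBall _ _)
    apply Continuous.continuousOn
    exact continuous_const.mul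
      (((EuclideanSpace.proj i : E →L[ℝ] ℝ).continuous).mul
        ((EuclideanSpace.proj j : E →L[ℝ] ℝ).continuous))
  calc ∫ z in closedBall (0 : E) r, B z z
      = ∫ z in closedBall (0 : E) r, ∑ i, ∑ j, B (EuclideanSpace.single i 1)
          (EuclideanSpace.single j 1) * (z i * z j) := by
        congr 1; ext z; exact hpt z
    _ = ∑ i, ∑ j, B (EuclideanSpace.single i 1) (EuclideanSpace.single j 1)
          * ∫ z in closedBall (0 : E) r, (z i * z j) := by
        rw [MeasureTheory.integral_finset_sum _ (fun i _ =>
          integrable_finset_sum _ (fun j _ => hint i j))]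
        congr 1
        ext i
        rw [MeasureTheory.integral_finset_sum _ (fun j _ => hint i j)]
        congr 1
        ext j
        rw [MeasureTheory.integral_const_mul]
    _ = ∑ i, B (EuclideanSpace.single i 1) (EuclideanSpace.single i 1)
          * (r^2/((d:ℝ)+2) * (volume (closedBall (0 : E) r)).toReal) := by
        congr 1
        ext i
        rw [Finset.sum_eq_single i]
        · have hsq : (∫ z in closedBall (0 : E) r, z i * z i)
              = ∫ z in closedBall (0 : E) r, (z i)^2 := by
            congr 1; ext z; ring
          rw [hsq, diag_moment_value hd hr i]
        · intro j _ hji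
          rw [cross_moment_zero i j (Ne.symm hji), mul_zero]
        · intro h; exact absurd (Finset.mem_univ i) h
    _ = _ := by rw [← Finset.sum_mul]

lemma taylor2_bound {f : E → ℝ} (hf : ContDiff ℝ 2 f) (x : E) {ε : ℝ} (hε : 0 < ε) :
    ∃ δ > 0, ∀ y : E, ‖y - x‖ ≤ δ →
      |f y - f x - fderiv ℝ f x (y - x)
        - (1/2) * fderiv ℝ (fderiv ℝ f) x (y - x) (y - x)| ≤ ε * ‖y - x‖^2 := by
  classical
  set L := fderiv ℝ f x with hL
  set B := fderiv ℝ (fderiv ℝ f) x with hB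
  have hdf : Differentiable ℝ f := hf.differentiable (by norm_num)
  have hf' : ContDiff ℝ 1 (fderiv ℝ f) := hf.fderiv_right (by norm_num)
  have hBst : HasFDerivAt (fderiv ℝ f) B x := (hf'.differentiable (by norm_num) x).hasFDerivAt
  have hsymm : ∀ u v, B u v = B v u := by
    intro u v
    exact (hf.contDiffAt.isSymmSndFDerivAt (by norm_num)) u v
  -- little-o property of the second derivative
  have hlo := hBst.isLittleO
  have hev := hlo.def hε
  rw [Metric.eventually_nhds_iff] at hev
  obtain ⟨δ₀, hδ₀, hball⟩ := hev
  refine ⟨δ₀ / 2, by positivity, fun y hy => ?_⟩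
  -- the remainder function and its derivative
  set φ : E → ℝ := fun z => f z - f x - L (z - x) - (1/2) * B (z - x) (z - x) with hφ
  set φ' : E → (E →L[ℝ] ℝ) := fun z => fderiv ℝ f z - L - B (z - x) with hφ'
  have hQ : ∀ z : E, HasFDerivAt (fun w : E => B (w - x) (w - x))
      ((2 : ℝ) • B (z - x)) z := by
    intro z
    have h1 : HasFDerivAt (fun w : E => w - x) (ContinuousLinearMap.id ℝ E) z :=
      (hasFDerivAt_id z).sub_const x
    have h2 := (ContinuousLinearMap.isBoundedBilinearMap B).hasFDerivAt (z - x, z - x)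
    have h3 := h2.comp z (h1.prodMk h1)
    refine h3.congr_fderiv ?_
    refine ContinuousLinearMap.ext fun w => ?_
    simp [two_smul]
    rw [hsymm z w, hsymm x w]
  have hφd : ∀ z : E, HasFDerivAt φ (φ' z) z := by
    intro z
    have h1 : HasFDerivAt (fun w : E => f w - f x) (fderiv ℝ f z) z :=
      (hdf z).hasFDerivAt.sub_const (f x)
    have h2 : HasFDerivAt (fun w : E => L (w - x)) L z := by
      have := L.hasFDerivAt.comp z ((hasFDerivAt_id z).sub_const x)
      simpa [Function.comp_def, map_sub] using this
    have h3 : HasFDerivAt (fun w : E => (1/2 : ℝ) * B (w - x) (w - x)) (B (z - x)) z := by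
      have := (hQ z).const_mul (1/2 : ℝ)
      rw [smul_smul, show (1/2:ℝ) * 2 = 1 by norm_num, one_smul] at this
      exact this
    have := (h1.sub h2).sub h3
    exact this
  have hbound : ∀ z ∈ closedBall x ‖y - x‖, ‖φ' z‖ ≤ (ε * ‖y - x‖) := by
    intro z hz
    have hz' : dist z x < δ₀ := by
      rw [mem_closedBall] at hz
      calc dist z x ≤ ‖y - x‖ := hz
        _ ≤ δ₀ / 2 := hy
        _ < δ₀ := by linarith
    have := hball hz'
    simp only [hφ'] at *
    calc ‖fderiv ℝ f z - L - B (z - x)‖ ≤ ε * ‖z - x‖ := by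
          simpa using this
      _ ≤ ε * ‖y - x‖ := by
          apply mul_le_mul_of_nonneg_left _ hε.le
          rw [← dist_eq_norm]
          exact hz
  have key := (convex_closedBall x ‖y - x‖).norm_image_sub_le_of_norm_hasFDerivWithin_le
    (fun z hz => (hφd z).hasFDerivWithinAt) hbound
    (mem_closedBall_self (by positivity)) (mem_closedBall.2 (le_of_eq (dist_eq_norm y x)))
  have hφx : φ x = 0 := by simp [hφ]
  have : |φ y| ≤ ε * ‖y - x‖ * ‖y - x‖ := by
    have := key
    rw [hφx, sub_zero] at this
    simpa [Real.norm_eq_abs] using this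
  calc |f y - f x - L (y - x) - (1/2) * B (y - x) (y - x)| = |φ y| := rfl
    _ ≤ ε * ‖y - x‖ * ‖y - x‖ := this
    _ = ε * ‖y - x‖^2 := by ring

lemma lapl_eq_sum {f : E → ℝ} (hf : ContDiff ℝ 2 f) (x : E) :
    lapl f x = ∑ i, fderiv ℝ (fderiv ℝ f) x (EuclideanSpace.single i 1)
      (EuclideanSpace.single i 1) := by
  unfold lapl
  refine Finset.sum_congr rfl fun i _ => ?_
  have hd1 : DifferentiableAt ℝ (fderiv ℝ f) x :=
    (hf.fderiv_right (by norm_num : (1:WithTop ℕ∞) + 1 ≤ 2)).differentiable (by norm_num) x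
  rw [fderiv_clm_apply hd1 (differentiableAt_const _)]
  simp

lemma ball_average_tendsto (hd : 0 < d) {f : E → ℝ} (hf : ContDiff ℝ 2 f) (x : E) :
    Tendsto (fun r : ℝ =>
        ((∫ y in closedBall x r, f y) / (volume (closedBall x r)).toReal - f x) / r^2)
      (nhdsWithin 0 (Set.Ioi 0)) (nhds (lapl f x / (2 * ((d:ℝ) + 2)))) := by
  haveI : Nonempty (Fin d) := ⟨⟨0, hd⟩⟩
  haveI : Nontrivial (EuclideanSpace ℝ (Fin d)) := by infer_instance
  set L := fderiv ℝ f x with hL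
  set B := fderiv ℝ (fderiv ℝ f) x with hB
  set S := ∑ i, B (EuclideanSpace.single i 1) (EuclideanSpace.single i 1) with hS
  rw [Metric.tendsto_nhdsWithin_nhds]
  intro ε hε
  obtain ⟨δ, hδ, htay⟩ := taylor2_bound hf x (show (0:ℝ) < ε/2 by linarith)
  refine ⟨min δ 1, by positivity, fun {r} hrIoi hrdist => ?_⟩
  have hr : (0:ℝ) < r := hrIoi
  have hrδ : r ≤ δ := by
    rw [Real.dist_eq, sub_zero, abs_of_pos hr] at hrdist
    exact le_of_lt (lt_of_lt_of_le hrdist (min_le_left _ _))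
  have hV0pos : 0 < (volume (closedBall (0:E) r)).toReal := by
    apply ENNReal.toReal_pos
    · exact (measure_closedBall_pos volume (0:E) hr).ne'
    · exact (measure_closedBall_lt_top).ne
  set V0 : ℝ := (volume (closedBall (0:E) r)).toReal with hV0
  have hVc : volume (closedBall x r) = volume (closedBall (0:E) r) :=
    Measure.addHaar_closedBall_center volume x r
  -- translation
  have htrans : ∫ y in closedBall x r, f y = ∫ z in closedBall (0:E) r, f (z + x) := by
    have hpre : (fun z : E => z + x) ⁻¹' (closedBall x r) = closedBall (0:E) r := by
      ext z
      simp [mem_closedBall, dist_eq_norm, add_sub_cancel_right]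
    rw [← (measurePreserving_add_right volume x).setIntegral_preimage_emb
        (MeasurableEquiv.addRight x).measurableEmbedding f (closedBall x r), hpre]
  -- remainder
  set R : E → ℝ := fun z => f (z + x) - f x - L z - (1/2) * B z z with hR
  have hcontf : Continuous fun z : E => f (z + x) :=
    hf.continuous.comp (continuous_add_right x)
  have hcontB : Continuous fun z : E => B z z := by
    have h1 : Continuous fun p : E × E => B p.1 p.2 :=
      (ContinuousLinearMap.isBoundedBilinearMap B).continuous
    exact h1.comp (continuous_id.prodMk continuous_id)
  have hintf : IntegrableOn (fun z : E => f (z + x)) (closedBall (0:E) r) volume :=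
    hcontf.continuousOn.integrableOn_compact (isCompact_closedBall _ _)
  have hintL : IntegrableOn (fun z : E => L z) (closedBall (0:E) r) volume :=
    L.continuous.continuousOn.integrableOn_compact (isCompact_closedBall _ _)
  have hintB : IntegrableOn (fun z : E => (1/2:ℝ) * B z z) (closedBall (0:E) r) volume :=
    (continuous_const.mul hcontB).continuousOn.integrableOn_compact (isCompact_closedBall _ _)
  have hintc : IntegrableOn (fun _ : E => f x) (closedBall (0:E) r) volume :=
    continuous_const.continuousOn.integrableOn_compact (isCompact_closedBall _ _)
  have hintR : IntegrableOn R (closedBall (0:E) r) volume :=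
    ((hintf.sub hintc).sub hintL).sub hintB
  have hsplit : ∫ z in closedBall (0:E) r, f (z + x)
      = f x * V0 + (1/2) * (S * (r^2/((d:ℝ)+2) * V0))
        + ∫ z in closedBall (0:E) r, R z := by
    have hfun : (fun z : E => f (z + x))
        = fun z => ((f x + L z) + (1/2) * B z z) + R z := by
      ext z; simp only [hR]; ring
    have hi1 : IntegrableOn (fun z : E => f x + L z) (closedBall (0:E) r) volume :=
      hintc.add hintL
    have hi2 : IntegrableOn (fun z : E => (f x + L z) + (1/2:ℝ) * B z z)
        (closedBall (0:E) r) volume := hi1.add hintB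
    rw [hfun, integral_add hi2 hintR, integral_add hi1 hintB, integral_add hintc hintL,
      setIntegral_const, integral_linear_zero, MeasureTheory.integral_const_mul,
      integral_bilin hd hr B, ← hS]
    simp [smul_eq_mul, mul_comm, measureReal_def, hV0]
  -- remainder bound
  have hRb : ∀ z ∈ closedBall (0:E) r, ‖R z‖ ≤ (ε/2) * ‖z‖^2 := by
    intro z hz
    rw [mem_closedBall, dist_eq_norm, sub_zero] at hz
    have hz' : ‖(z + x) - x‖ ≤ δ := by
      rw [add_sub_cancel_right]; exact le_trans hz hrδ
    have h2 := htay (z + x) hz'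
    rw [add_sub_cancel_right] at h2
    simpa [hR, Real.norm_eq_abs] using h2
  have hRbound : |∫ z in closedBall (0:E) r, R z| ≤ ε/2 * (r^2 * V0) := by
    have h1 : ‖∫ z in closedBall (0:E) r, R z‖
        ≤ ∫ z in closedBall (0:E) r, (ε/2) * ‖z‖^2 := by
      apply norm_integral_le_of_norm_le
      · exact (continuous_const.mul (continuous_norm.pow 2)).continuousOn.integrableOn_compact
          (isCompact_closedBall _ _)
      · exact (ae_restrict_iff' measurableSet_closedBall).2 (Filter.Eventually.of_forall hRb)
    rw [MeasureTheory.integral_const_mul, integral_norm_sq_closedBall hd hr] at h1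
    rw [Real.norm_eq_abs] at h1
    have hfrac : (d:ℝ)/((d:ℝ)+2) ≤ 1 := by
      rw [div_le_one (by positivity)]; linarith
    calc |∫ z in closedBall (0:E) r, R z|
        ≤ ε/2 * ((d:ℝ)/((d:ℝ)+2) * r^2 * V0) := h1
      _ ≤ ε/2 * (r^2 * V0) := by
          apply mul_le_mul_of_nonneg_left _ (by linarith)
          have h3 : (d:ℝ)/((d:ℝ)+2) * r^2 * V0 ≤ 1 * r^2 * V0 := by
            apply mul_le_mul_of_nonneg_right _ hV0pos.le
            apply mul_le_mul_of_nonneg_right hfrac (by positivity)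
          linarith [h3]
  -- final assembly
  have hV0ne : V0 ≠ 0 := hV0pos.ne'
  have hrne : r ≠ 0 := hr.ne'
  have hd2ne : ((d:ℝ)+2) ≠ 0 := by positivity
  have hexpr : ((∫ y in closedBall x r, f y) / (volume (closedBall x r)).toReal - f x)/r^2
      = S/(2*((d:ℝ)+2)) + (∫ z in closedBall (0:E) r, R z)/(V0 * r^2) := by
    rw [htrans, hVc, ← hV0, hsplit]
    field_simp
    ring
  rw [Real.dist_eq, hexpr, lapl_eq_sum hf x, ← hB, ← hS]
  have heq : S/(2*((d:ℝ)+2)) + (∫ z in closedBall (0:E) r, R z)/(V0 * r^2)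
      - S/(2*((d:ℝ)+2)) = (∫ z in closedBall (0:E) r, R z)/(V0 * r^2) := by ring
  have hpos : (0:ℝ) < V0 * r^2 := mul_pos hV0pos (by positivity)
  rw [heq, abs_div, abs_of_pos hpos, div_lt_iff₀ hpos]
  calc |∫ z in closedBall (0:E) r, R z| ≤ ε/2 * (r^2 * V0) := hRbound
    _ = (ε/2) * (V0 * r^2) := by ring
    _ < ε * (V0 * r^2) := mul_lt_mul_of_pos_right (by linarith) hpos

lemma inner_gradient_apply (f : E → ℝ) (x v : E) :
    (inner ℝ (gradient f x) v : ℝ) = fderiv ℝ f x v := by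
  unfold gradient
  rw [InnerProductSpace.toDual_symm_apply]

lemma grad_coord (f : E → ℝ) (x : E) (i : Fin d) :
    (gradient f x) i = fderiv ℝ f x (EuclideanSpace.single i 1) := by
  rw [← inner_gradient_apply]
  rw [PiLp.inner_apply]
  simp [EuclideanSpace.single_apply, RCLike.inner_apply, Finset.sum_ite_eq']

lemma inner_gradients (η p : E → ℝ) (x : E) :
    (inner ℝ (gradient η x) (gradient p x) : ℝ)
      = ∑ i, fderiv ℝ η x (EuclideanSpace.single i 1)
          * fderiv ℝ p x (EuclideanSpace.single i 1) := by
  rw [PiLp.inner_apply]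
  refine Finset.sum_congr rfl fun i _ => ?_
  rw [RCLike.inner_apply']
  simp only [starRingEnd_apply, star_trivial]
  rw [grad_coord, grad_coord]

lemma lapl_mul {η p : E → ℝ} (hη : ContDiff ℝ 2 η) (hp : ContDiff ℝ 2 p) (x : E) :
    lapl (fun y => η y * p y) x = η x * lapl p x
      + 2 * ∑ i, fderiv ℝ η x (EuclideanSpace.single i 1)
          * fderiv ℝ p x (EuclideanSpace.single i 1)
      + p x * lapl η x := by
  have hηd : Differentiable ℝ η := hη.differentiable (by norm_num)
  have hpd : Differentiable ℝ p := hp.differentiable (by norm_num)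
  have hη1 : ContDiff ℝ 1 (fderiv ℝ η) := hη.fderiv_right (by norm_num)
  have hp1 : ContDiff ℝ 1 (fderiv ℝ p) := hp.fderiv_right (by norm_num)
  unfold lapl
  rw [Finset.mul_sum, Finset.mul_sum, Finset.mul_sum, ← Finset.sum_add_distrib,
    ← Finset.sum_add_distrib]
  refine Finset.sum_congr rfl fun i _ => ?_
  set v := EuclideanSpace.single i (1:ℝ) with hv
  have hg1 : DifferentiableAt ℝ (fun y => fderiv ℝ p y v) x :=
    (hp1.differentiable (by norm_num) x).clm_apply (differentiableAt_const v)
  have hg2 : DifferentiableAt ℝ (fun y => fderiv ℝ η y v) x :=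
    (hη1.differentiable (by norm_num) x).clm_apply (differentiableAt_const v)
  have hstep1 : (fun y => fderiv ℝ (fun z => η z * p z) y v)
      = fun y => η y * fderiv ℝ p y v + p y * fderiv ℝ η y v := by
    ext y
    rw [fderiv_fun_mul (hηd y) (hpd y)]
    simp [smul_eq_mul]
  rw [hstep1]
  have hBp : fderiv ℝ (fun y => fderiv ℝ p y v) x = (fderiv ℝ (fderiv ℝ p) x).flip v := by
    rw [fderiv_clm_apply (hp1.differentiable (by norm_num) x) (differentiableAt_const v)]
    simp
  have hBη : fderiv ℝ (fun y => fderiv ℝ η y v) x = (fderiv ℝ (fderiv ℝ η) x).flip v := by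
    rw [fderiv_clm_apply (hη1.differentiable (by norm_num) x) (differentiableAt_const v)]
    simp
  have hfirst : fderiv ℝ (fun y => η y * fderiv ℝ p y v) x
      = η x • fderiv ℝ (fun y => fderiv ℝ p y v) x + (fderiv ℝ p x v) • fderiv ℝ η x :=
    fderiv_mul (hηd x) hg1
  have hsecond : fderiv ℝ (fun y => p y * fderiv ℝ η y v) x
      = p x • fderiv ℝ (fun y => fderiv ℝ η y v) x + (fderiv ℝ η x v) • fderiv ℝ p x :=
    fderiv_mul (hpd x) hg2
  rw [fderiv_fun_add (f := fun y => η y * fderiv ℝ p y v) (g := fun y => p y * fderiv ℝ η y v) ((hηd x).mul hg1) ((hpd x).mul hg2), ContinuousLinearMap.add_apply,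
    hfirst, hsecond, hBp, hBη]
  simp only [ContinuousLinearMap.add_apply, ContinuousLinearMap.smul_apply,
    ContinuousLinearMap.flip_apply, smul_eq_mul]
  ring

end Aux

/-- **Pointwise bias of the radius-based ball-average (radial k-NN) regressor.**
For a `C³` density `p` with bounded derivatives up to order 3 and a `C²` target `η`
with bounded derivatives up to order 2, at any `x` with `p(x) > 0`,
`(𝒩(r)/𝒟(r) − η(x))/r² → (1/(d+2)) (⟪∇η(x), ∇p(x)⟫/p(x) + Δη(x)/2)` as `r → 0⁺`,
where `𝒩(r) = ∫_{B(x,r)} η p` and `𝒟(r) = ∫_{B(x,r)} p`. -/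
theorem knn_pointwise_bias
    {d : ℕ} (p η : EuclideanSpace ℝ (Fin d) → ℝ)
    (hp : ContDiff ℝ 3 p)
    (hpb : ∀ n : ℕ, n ≤ 3 → ∃ C, ∀ y, ‖iteratedFDeriv ℝ n p y‖ ≤ C)
    (hpnn : ∀ y, 0 ≤ p y) (hpint : (∫ y, p y) = 1)
    (hη : ContDiff ℝ 2 η)
    (hηb : ∀ n : ℕ, n ≤ 2 → ∃ C, ∀ y, ‖iteratedFDeriv ℝ n η y‖ ≤ C)
    (x : EuclideanSpace ℝ (Fin d)) (hx : 0 < p x) :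
    Tendsto (fun r : ℝ =>
        ((∫ y in Metric.closedBall x r, η y * p y) / (∫ y in Metric.closedBall x r, p y)
          - η x) / r ^ 2)
      (nhdsWithin 0 (Set.Ioi 0))
      (nhds ((1 / ((d : ℝ) + 2)) *
        ((inner ℝ (gradient η x) (gradient p x) : ℝ) / p x + (1 / 2) * lapl η x))) := by
  rcases Nat.eq_zero_or_pos d with hd0 | hd
  · -- degenerate case d = 0
    subst hd0
    haveI : Subsingleton (EuclideanSpace ℝ (Fin 0)) := inferInstance
    have hconst : ∀ (f : EuclideanSpace ℝ (Fin 0) → ℝ) (y), f y = f x :=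
      fun f y => by rw [Subsingleton.elim y x]
    have hc : (∫ y, p y) = (volume (Set.univ : Set (EuclideanSpace ℝ (Fin 0)))).toReal * p x := by
      rw [show p = fun _ => p x from funext (hconst p)]
      rw [integral_const, smul_eq_mul, measureReal_def]
    set c := (volume (Set.univ : Set (EuclideanSpace ℝ (Fin 0)))).toReal with hcdef
    have hcpx : c * p x = 1 := by rw [← hc, hpint]
    have hzero : (1 / ((0:ℕ) : ℝ) + 2)⁻¹ = (1:ℝ)/2 := by norm_num
    have hgrad0 : (inner ℝ (gradient η x) (gradient p x) : ℝ) = 0 := by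
      rw [Subsingleton.elim (gradient η x) (0 : EuclideanSpace ℝ (Fin 0))]
      rw [inner_zero_left]
    have hlapl0 : lapl η x = 0 := by
      unfold lapl
      simp
    rw [hgrad0, hlapl0]
    norm_num
    have hev : ∀ r ∈ Set.Ioi (0:ℝ),
        ((∫ y in Metric.closedBall x r, η y * p y) / (∫ y in Metric.closedBall x r, p y)
          - η x) / r ^ 2 = 0 := by
      intro r hr
      have hball : Metric.closedBall x r = Set.univ := by
        ext y
        simp [Metric.mem_closedBall, Subsingleton.elim y x, dist_self, le_of_lt (Set.mem_Ioi.1 hr)]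
      have h1 : (∫ y in Metric.closedBall x r, η y * p y) = c * (η x * p x) := by
        rw [hball, Measure.restrict_univ,
          show (fun y => η y * p y) = fun _ => η x * p x from
            funext (fun y => by rw [hconst η y, hconst p y]),
          integral_const, smul_eq_mul, measureReal_def]
      have h2 : (∫ y in Metric.closedBall x r, p y) = c * p x := by
        rw [hball, Measure.restrict_univ,
          show p = fun _ => p x from funext (hconst p), integral_const, smul_eq_mul, measureReal_def]
      rw [h1, h2, hcpx, div_one]
      have hce : c * (η x * p x) = η x := by
        rw [show c * (η x * p x) = η x * (c * p x) by ring, hcpx, mul_one]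
      rw [hce]
      simp
    refine Tendsto.congr' ?_ tendsto_const_nhds
    filter_upwards [self_mem_nhdsWithin] with r hr
    exact (hev r hr).symm
  · -- main case d > 0
    haveI : Nonempty (Fin d) := ⟨⟨0, hd⟩⟩
    haveI : Nontrivial (EuclideanSpace ℝ (Fin d)) := inferInstance
    have hp2 : ContDiff ℝ 2 p := hp.of_le (by norm_num)
    set g : EuclideanSpace ℝ (Fin d) → ℝ := fun y => η y * p y with hgdef
    have hg : ContDiff ℝ 2 g := hη.mul hp2
    set V : ℝ → ℝ := fun r => (volume (closedBall x r)).toReal with hVdef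
    set A : (EuclideanSpace ℝ (Fin d) → ℝ) → ℝ → ℝ :=
      fun f r => (∫ y in closedBall x r, f y) / V r with hAdef
    set T : (EuclideanSpace ℝ (Fin d) → ℝ) → ℝ → ℝ :=
      fun f r => (A f r - f x) / r^2 with hTdef
    have hTg : Tendsto (T g) (nhdsWithin 0 (Set.Ioi 0))
        (nhds (lapl g x / (2 * ((d:ℝ) + 2)))) := ball_average_tendsto hd hg x
    have hTp : Tendsto (T p) (nhdsWithin 0 (Set.Ioi 0))
        (nhds (lapl p x / (2 * ((d:ℝ) + 2)))) := ball_average_tendsto hd hp2 x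
    have hr2 : Tendsto (fun r : ℝ => r^2) (nhdsWithin 0 (Set.Ioi 0)) (nhds 0) := by
      have := ((continuous_pow 2).tendsto (0:ℝ)).mono_left
        (nhdsWithin_le_nhds (s := Set.Ioi (0:ℝ)))
      simpa using this
    have hAp : Tendsto (A p) (nhdsWithin 0 (Set.Ioi 0)) (nhds (p x)) := by
      have h1 : Tendsto (fun r => p x + T p r * r^2) (nhdsWithin 0 (Set.Ioi 0))
          (nhds (p x + (lapl p x / (2 * ((d:ℝ) + 2))) * 0)) :=
        tendsto_const_nhds.add (hTp.mul hr2)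
      rw [mul_zero, add_zero] at h1
      refine Tendsto.congr' ?_ h1
      filter_upwards [self_mem_nhdsWithin] with r hr
      have hrne : (r:ℝ) ≠ 0 := (Set.mem_Ioi.1 hr).ne'
      simp only [hTdef]
      field_simp
      ring
    have hVpos : ∀ r : ℝ, 0 < r → 0 < V r := by
      intro r hr
      apply ENNReal.toReal_pos
      · exact (measure_closedBall_pos volume x hr).ne'
      · exact (measure_closedBall_lt_top).ne
    have hApos : ∀ᶠ r in nhdsWithin (0:ℝ) (Set.Ioi 0), 0 < A p r :=
      hAp.eventually (eventually_gt_nhds hx)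
    have hmain : Tendsto (fun r => (T g r - η x * T p r) / A p r)
        (nhdsWithin 0 (Set.Ioi 0))
        (nhds ((lapl g x / (2 * ((d:ℝ) + 2)) - η x * (lapl p x / (2 * ((d:ℝ) + 2)))) / p x)) :=
      Tendsto.div (hTg.sub (tendsto_const_nhds.mul hTp)) hAp hx.ne'
    have hcongr : ∀ᶠ r in nhdsWithin (0:ℝ) (Set.Ioi 0),
        (T g r - η x * T p r) / A p r
          = ((∫ y in Metric.closedBall x r, η y * p y)
              / (∫ y in Metric.closedBall x r, p y) - η x) / r ^ 2 := by
      filter_upwards [self_mem_nhdsWithin, hApos] with r hr hA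
      have hrpos : (0:ℝ) < r := hr
      have hrne : (r:ℝ) ≠ 0 := hrpos.ne'
      have hVne : V r ≠ 0 := (hVpos r hrpos).ne'
      have hDne : (∫ y in Metric.closedBall x r, p y) ≠ 0 := by
        intro h0
        rw [hAdef] at hA
        simp only at hA
        rw [h0, zero_div] at hA
        exact lt_irrefl 0 hA
      simp only [hTdef, hAdef, hgdef]
      field_simp
      ring
    have hfinal : (lapl g x / (2 * ((d:ℝ) + 2)) - η x * (lapl p x / (2 * ((d:ℝ) + 2)))) / p x
        = (1 / ((d : ℝ) + 2)) *
          ((inner ℝ (gradient η x) (gradient p x) : ℝ) / p x + (1 / 2) * lapl η x) := by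
      rw [hgdef, lapl_mul hη hp2 x, inner_gradients η p x]
      have hd2 : ((d:ℝ) + 2) ≠ 0 := by positivity
      field_simp
      ring
    rw [← hfinal]
    exact Tendsto.congr' hcongr hmain
end

section
/- Pointwise bias of the Nadaraya–Watson kernel regressor: let K : ℝ^d → ℝ be a kernel satisfying ∫ K(u) du = 1, ∫ u K(u) du = 0, ∫ u uᵀ K(u) du = μ₂ I_d for some μ₂ ∈ (0, ∞), and ∫ ‖u‖³ |K(u)| du < ∞. Let p : ℝ^d → ℝ be a probability density and m : ℝ^d → ℝ a regression function, both three-times continuously differentiable with bounded derivatives up to order 3, and fix x ∈ ℝ^d with p(x) > 0. Then lim_{h → 0⁺} h^{−2} ( ∫ K(t) m(x − h t) p(x − h t) dt / ∫ K(t) p(x − h t) dt − m(x) ) = (μ₂/2) ( Δm(x) + 2 ⟨∇m(x), ∇p(x)⟩ / p(x) ); i.e., the leading bias of the Nadaraya–Watson estimator at x is (h² μ₂ / 2)( Δm(x) + 2 ∇m(x)·∇ log p(x) ) + o(h²). -/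
open MeasureTheory Filter BigOperators

section Taylor
variable {E F : Type*} [NormedAddCommGroup E] [NormedSpace ℝ E]
  [NormedAddCommGroup F] [NormedSpace ℝ F]

lemma seg_norm_le {x v : E} {z : E} (hz : z ∈ segment ℝ x (x + v)) : ‖z - x‖ ≤ ‖v‖ := by
  rw [segment_eq_image'] at hz
  obtain ⟨θ, ⟨h0, h1⟩, rfl⟩ := hz
  simp only [add_sub_cancel_left, add_sub_cancel_left]
  rw [norm_smul, Real.norm_eq_abs, abs_of_nonneg h0]
  nlinarith [norm_nonneg v]

lemma taylor_one (f : E → F) (hf : ContDiff ℝ 2 f) {C : ℝ}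
    (hb : ∀ y, ‖fderiv ℝ (fderiv ℝ f) y‖ ≤ C) (x v : E) :
    ‖f (x + v) - f x - fderiv ℝ f x v‖ ≤ C * ‖v‖ ^ 2 := by
  have hC : 0 ≤ C := le_trans (norm_nonneg (fderiv ℝ (fderiv ℝ f) x)) (hb x)
  have hdf : Differentiable ℝ f := hf.differentiable (by norm_num)
  have hdf2 : Differentiable ℝ (fderiv ℝ f) :=
    (hf.fderiv_right (m := 1) (by norm_num)).differentiable one_ne_zero
  have lip : ∀ z : E, ‖fderiv ℝ f z - fderiv ℝ f x‖ ≤ C * ‖z - x‖ := fun z =>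
    (convex_univ).norm_image_sub_le_of_norm_fderiv_le (fun y _ => hdf2 y)
      (fun y _ => hb y) (Set.mem_univ x) (Set.mem_univ z)
  have seg : Convex ℝ (segment ℝ x (x + v)) := convex_segment _ _
  have key := seg.norm_image_sub_le_of_norm_fderiv_le' (fun y _ => hdf y)
    (fun y hy => le_trans (lip y) (mul_le_mul_of_nonneg_left (seg_norm_le hy) hC))
    (left_mem_segment ℝ x (x + v)) (right_mem_segment ℝ x (x + v))
  simpa [add_sub_cancel_left, pow_two, mul_assoc] using key

lemma norm_fderiv_eq_one' (f : E → F) (y : E) :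
    ‖fderiv ℝ f y‖ = ‖iteratedFDeriv ℝ 1 f y‖ := by
  calc ‖fderiv ℝ f y‖ = ‖iteratedFDeriv ℝ 0 (fderiv ℝ f) y‖ :=
        (norm_iteratedFDeriv_zero).symm
    _ = ‖iteratedFDeriv ℝ (0 + 1) f y‖ := norm_iteratedFDeriv_fderiv
    _ = ‖iteratedFDeriv ℝ 1 f y‖ := rfl

lemma taylor_two (f : E → F) (hf : ContDiff ℝ 3 f) {C : ℝ}
    (hb : ∀ y, ‖iteratedFDeriv ℝ 3 f y‖ ≤ C) (x v : E) :
    ‖f (x + v) - f x - fderiv ℝ f x v - (2:ℝ)⁻¹ • fderiv ℝ (fderiv ℝ f) x v v‖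
      ≤ C * ‖v‖ ^ 3 := by
  have hC : 0 ≤ C := le_trans (norm_nonneg _) (hb x)
  set g := fderiv ℝ f with hgdef
  set H := fderiv ℝ g x with hHdef
  have hdf : Differentiable ℝ f := hf.differentiable (by norm_num)
  have hg : ContDiff ℝ 2 g := hf.fderiv_right (by norm_num)
  have hdg : Differentiable ℝ g := hg.differentiable (by norm_num)
  have t1 : ∀ z : E, ‖g z - g x - H (z - x)‖ ≤ C * ‖z - x‖ ^ 2 := by
    intro z
    have := taylor_one g hg (fun y => by
      rw [norm_fderiv_eq_one', hgdef, norm_iteratedFDeriv_fderiv, norm_iteratedFDeriv_fderiv]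
      exact hb y) x (z - x)
    simpa [add_sub_cancel] using this
  have hsymm : ∀ a b : E, H a b = H b a :=
    second_derivative_symmetric (f := f) (fun y => (hdf y).hasFDerivAt)
      ((hdg x).hasFDerivAt) 
  set ψ : E → F := fun y => f y - g x (y - x) - (2:ℝ)⁻¹ • H (y - x) (y - x) with hψdef
  have hψ : ∀ y : E, HasFDerivAt ψ (g y - g x - H (y - x)) y := by
    intro y
    have hid : HasFDerivAt (fun y : E => y - x) (ContinuousLinearMap.id ℝ E) y :=
      (hasFDerivAt_id y).sub_const x
    have h2 : HasFDerivAt (fun y : E => g x (y - x)) (g x) y := by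
      have h := (g x).hasFDerivAt.comp y hid
      rwa [ContinuousLinearMap.comp_id] at h
    have hc : HasFDerivAt (fun y : E => H (y - x)) H y := by
      have h := H.hasFDerivAt.comp y hid
      rwa [ContinuousLinearMap.comp_id] at h
    have h3 : HasFDerivAt (fun y : E => H (y - x) (y - x))
        ((H (y - x)).comp (ContinuousLinearMap.id ℝ E) + H.flip (y - x)) y :=
      hc.clm_apply hid
    have h3' : HasFDerivAt (fun y : E => (2:ℝ)⁻¹ • H (y - x) (y - x)) (H (y - x)) y := by
      have := h3.const_smul ((2:ℝ)⁻¹)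
      convert this using 1
      · rfl
      ext w
      simp only [ContinuousLinearMap.smul_apply, ContinuousLinearMap.add_apply,
        ContinuousLinearMap.comp_apply, ContinuousLinearMap.coe_id', id_eq,
        ContinuousLinearMap.flip_apply]
      rw [hsymm w (y - x)]
      module
    exact ((hdf y).hasFDerivAt.sub h2).sub h3'
  have seg : Convex ℝ (segment ℝ x (x + v)) := convex_segment _ _
  have bound : ∀ z ∈ segment ℝ x (x + v), ‖g z - g x - H (z - x)‖ ≤ C * ‖v‖ ^ 2 := by
    intro z hz
    refine le_trans (t1 z) (mul_le_mul_of_nonneg_left ?_ hC)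
    exact pow_le_pow_left₀ (norm_nonneg _) (seg_norm_le hz) 2
  have key := seg.norm_image_sub_le_of_norm_hasFDerivWithin_le
    (f := ψ) (f' := fun z => g z - g x - H (z - x)) (C := C * ‖v‖ ^ 2)
    (fun z hz => (hψ z).hasFDerivWithinAt) bound
    (left_mem_segment ℝ x (x + v)) (right_mem_segment ℝ x (x + v))
  have hψx : ψ x = f x := by simp [hψdef]
  have hψxv : ψ (x + v) = f (x + v) - g x v - (2:ℝ)⁻¹ • H v v := by
    simp only [hψdef, add_sub_cancel_left]
  calc ‖f (x + v) - f x - g x v - (2:ℝ)⁻¹ • H v v‖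
      = ‖ψ (x + v) - ψ x‖ := by rw [hψx, hψxv]; congr 1; abel
    _ ≤ C * ‖v‖ ^ 2 * ‖x + v - x‖ := key
    _ = C * ‖v‖ ^ 3 := by rw [add_sub_cancel_left]; ring

end Taylor

section Aux
variable {E : Type*} [NormedAddCommGroup E] [NormedSpace ℝ E]
  {F : Type*} [NormedAddCommGroup F] [NormedSpace ℝ F]

lemma norm_fderiv_eq_one (f : E → F) (y : E) :
    ‖fderiv ℝ f y‖ = ‖iteratedFDeriv ℝ 1 f y‖ := by
  calc ‖fderiv ℝ f y‖ = ‖iteratedFDeriv ℝ 0 (fderiv ℝ f) y‖ :=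
        (norm_iteratedFDeriv_zero).symm
    _ = ‖iteratedFDeriv ℝ (0 + 1) f y‖ := norm_iteratedFDeriv_fderiv
    _ = ‖iteratedFDeriv ℝ 1 f y‖ := rfl

lemma bound_package (f : E → F)
    (hfb : ∀ n : ℕ, n ≤ 3 → ∃ C, ∀ y, ‖iteratedFDeriv ℝ n f y‖ ≤ C) :
    ∃ C, 0 ≤ C ∧ ∀ n : ℕ, n ≤ 3 → ∀ y, ‖iteratedFDeriv ℝ n f y‖ ≤ C := by
  obtain ⟨C0, h0⟩ := hfb 0 (by norm_num)
  obtain ⟨C1, h1⟩ := hfb 1 (by norm_num)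
  obtain ⟨C2, h2⟩ := hfb 2 (by norm_num)
  obtain ⟨C3, h3⟩ := hfb 3 (by norm_num)
  refine ⟨max 0 (max (max C0 C1) (max C2 C3)), le_max_left _ _, ?_⟩
  intro n hn y
  interval_cases n
  · exact le_trans (h0 y) (by simp [le_max_iff, le_refl])
  · exact le_trans (h1 y) (by simp [le_max_iff, le_refl])
  · exact le_trans (h2 y) (by simp [le_max_iff, le_refl])
  · exact le_trans (h3 y) (by simp [le_max_iff, le_refl])

end Aux

section Euclid
variable {d : ℕ}

lemma abs_apply_le_norm (t : EuclideanSpace ℝ (Fin d)) (i : Fin d) : |t i| ≤ ‖t‖ := by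
  have h := abs_real_inner_le_norm (EuclideanSpace.single i (1 : ℝ)) t
  simpa [EuclideanSpace.inner_single_left, EuclideanSpace.norm_single] using h

lemma sum_single_eq_s18 (t : EuclideanSpace ℝ (Fin d)) :
    ∑ i, t i • EuclideanSpace.single i (1 : ℝ) = t := by
  have h := (EuclideanSpace.basisFun (Fin d) ℝ).sum_repr t
  simpa [EuclideanSpace.basisFun_apply, EuclideanSpace.basisFun_repr] using h

lemma norm_le_one_add_cube (t : EuclideanSpace ℝ (Fin d)) : ‖t‖ ≤ 1 + ‖t‖ ^ 3 := by
  rcases le_total ‖t‖ 1 with h | h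
  · nlinarith [pow_nonneg (norm_nonneg t) 3]
  · nlinarith [sq_nonneg (‖t‖ - 1), sq_nonneg (‖t‖ + 1), norm_nonneg t]

lemma sq_norm_le_one_add_cube (t : EuclideanSpace ℝ (Fin d)) : ‖t‖ ^ 2 ≤ 1 + ‖t‖ ^ 3 := by
  rcases le_total ‖t‖ 1 with h | h
  · nlinarith [pow_nonneg (norm_nonneg t) 3, sq_nonneg ‖t‖, norm_nonneg t]
  · nlinarith [sq_nonneg (‖t‖ - 1), sq_nonneg (‖t‖ + 1), norm_nonneg t, sq_nonneg ‖t‖]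

end Euclid

set_option maxHeartbeats 2000000 in
/-- **Pointwise bias of the Nadaraya–Watson kernel regressor.** For a kernel `K` with
`∫K = 1`, `∫ u K(u) du = 0`, `∫ u uᵀ K(u) du = μ₂ I_d`, and `∫ ‖u‖³|K(u)| du < ∞`,
a `C³` density `p` and regression function `m` with bounded derivatives up to order 3,
and any `x` with `p(x) > 0`:
`h⁻²(∫K(t)m(x−ht)p(x−ht)dt / ∫K(t)p(x−ht)dt − m(x))
  → (μ₂/2)(Δm(x) + 2⟪∇m(x), ∇p(x)⟫/p(x))` as `h → 0⁺`. -/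
theorem nadaraya_watson_pointwise_bias
    {d : ℕ} (Kk : EuclideanSpace ℝ (Fin d) → ℝ)
    (hKint : Integrable Kk) (hK1 : (∫ u, Kk u) = 1)
    (hKsym : (∫ u, Kk u • u) = (0 : EuclideanSpace ℝ (Fin d)))
    (μ2 : ℝ) (hμ2pos : 0 < μ2)
    (hKiso : ∀ i j, (∫ u : EuclideanSpace ℝ (Fin d), u i * u j * Kk u)
      = if i = j then μ2 else 0)
    (hK3 : Integrable (fun u : EuclideanSpace ℝ (Fin d) => ‖u‖ ^ 3 * |Kk u|))
    (p m : EuclideanSpace ℝ (Fin d) → ℝ)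
    (hp : ContDiff ℝ 3 p)
    (hpb : ∀ n : ℕ, n ≤ 3 → ∃ C, ∀ y, ‖iteratedFDeriv ℝ n p y‖ ≤ C)
    (hpnn : ∀ y, 0 ≤ p y) (hpint : (∫ y, p y) = 1)
    (hm : ContDiff ℝ 3 m)
    (hmb : ∀ n : ℕ, n ≤ 3 → ∃ C, ∀ y, ‖iteratedFDeriv ℝ n m y‖ ≤ C)
    (x : EuclideanSpace ℝ (Fin d)) (hx : 0 < p x) :
    Tendsto (fun h : ℝ =>
        ((∫ t, Kk t * m (x - h • t) * p (x - h • t)) / (∫ t, Kk t * p (x - h • t))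
          - m x) / h ^ 2)
      (nhdsWithin 0 (Set.Ioi 0))
      (nhds ((μ2 / 2) *
        (lapl m x + 2 * (inner ℝ (gradient m x) (gradient p x) : ℝ) / p x))) := by
  classical
  set e : Fin d → EuclideanSpace ℝ (Fin d) := fun i => EuclideanSpace.single i 1 with hedef
  -- bounds on m, p
  obtain ⟨Cm, hCm0, hCm⟩ := bound_package m hmb
  obtain ⟨Cp, hCp0, hCp⟩ := bound_package p hpb
  have hpval : ∀ y, |p y| ≤ Cp := fun y => by
    simpa [norm_iteratedFDeriv_zero] using hCp 0 (by norm_num) y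
  have hmval : ∀ y, |m y| ≤ Cm := fun y => by
    simpa [norm_iteratedFDeriv_zero] using hCm 0 (by norm_num) y
  have hp1 : ∀ y, ‖fderiv ℝ p y‖ ≤ Cp := fun y => by
    rw [norm_fderiv_eq_one]; exact hCp 1 (by norm_num) y
  have hmd : Differentiable ℝ m := hm.differentiable (by norm_num)
  have hpd : Differentiable ℝ p := hp.differentiable (by norm_num)
  have hmd2 : Differentiable ℝ (fderiv ℝ m) :=
    (hm.fderiv_right (m := 2) (by norm_num)).differentiable (by norm_num)
  have hpd2 : Differentiable ℝ (fderiv ℝ p) :=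
    (hp.fderiv_right (m := 2) (by norm_num)).differentiable (by norm_num)
  -- the centered function G
  set G : EuclideanSpace ℝ (Fin d) → ℝ := fun y => (m y - m x) * p y with hGdef
  have hG : ContDiff ℝ 3 G := (hm.sub contDiff_const).mul hp
  have hGx : G x = 0 := by simp [hGdef]
  have hfderivG : ∀ y, HasFDerivAt G
      ((m y - m x) • fderiv ℝ p y + p y • fderiv ℝ m y) y := by
    intro y
    exact (((hmd y).hasFDerivAt).sub_const (m x)).mul ((hpd y).hasFDerivAt)
  have hfderivG' : fderiv ℝ G =
      fun y => (m y - m x) • fderiv ℝ p y + p y • fderiv ℝ m y :=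
    funext fun y => (hfderivG y).fderiv
  -- second derivative of G at x
  set Hq : EuclideanSpace ℝ (Fin d) →L[ℝ] EuclideanSpace ℝ (Fin d) →L[ℝ] ℝ :=
    ((fderiv ℝ m x).smulRight (fderiv ℝ p x)) +
      (p x • fderiv ℝ (fderiv ℝ m) x + (fderiv ℝ p x).smulRight (fderiv ℝ m x))
    with hHqdef
  have hHqAt : HasFDerivAt (fderiv ℝ G) Hq x := by
    rw [hfderivG']
    have h₁ : HasFDerivAt (fun y => (m y - m x) • fderiv ℝ p y)
        ((m x - m x) • fderiv ℝ (fderiv ℝ p) x +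
          (fderiv ℝ m x).smulRight (fderiv ℝ p x)) x :=
      HasFDerivAt.smul (((hmd x).hasFDerivAt).sub_const (m x)) ((hpd2 x).hasFDerivAt)
    have h₂ : HasFDerivAt (fun y => p y • fderiv ℝ m y)
        (p x • fderiv ℝ (fderiv ℝ m) x + (fderiv ℝ p x).smulRight (fderiv ℝ m x)) x :=
      HasFDerivAt.smul ((hpd x).hasFDerivAt) ((hmd2 x).hasFDerivAt)
    have := h₁.add h₂
    simp only [sub_self, zero_smul, zero_add] at this
    exact this
  have hHqeq : fderiv ℝ (fderiv ℝ G) x = Hq := hHqAt.fderiv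
  -- trace of Hq
  set trH : ℝ := ∑ i, Hq (e i) (e i) with htrHdef
  have htrH : trH = p x * lapl m x + 2 * (inner ℝ (gradient m x) (gradient p x) : ℝ) := by
    have hterm : ∀ i, Hq (e i) (e i) =
        fderiv ℝ m x (e i) * fderiv ℝ p x (e i) +
          (p x * (fderiv ℝ (fderiv ℝ m) x (e i) (e i)) +
            fderiv ℝ p x (e i) * fderiv ℝ m x (e i)) := by
      intro i
      simp [hHqdef, ContinuousLinearMap.smulRight_apply, smul_eq_mul, mul_comm]
    have hlapl : lapl m x = ∑ i, fderiv ℝ (fderiv ℝ m) x (e i) (e i) := by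
      unfold lapl
      refine Finset.sum_congr rfl fun i _ => ?_
      have hu : DifferentiableAt ℝ (fun _ : EuclideanSpace ℝ (Fin d) => e i) x := differentiableAt_const _
      rw [fderiv_clm_apply (hmd2 x) hu]
      simp [fderiv_const, hedef]
    have hinner : (inner ℝ (gradient m x) (gradient p x) : ℝ)
        = ∑ i, fderiv ℝ m x (e i) * fderiv ℝ p x (e i) := by
      have h := (EuclideanSpace.basisFun (Fin d) ℝ).sum_inner_mul_inner
        (gradient m x) (gradient p x)
      rw [← h]
      refine Finset.sum_congr rfl fun i _ => ?_
      have h1 : (inner ℝ (gradient m x) ((EuclideanSpace.basisFun (Fin d) ℝ) i) : ℝ)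
          = fderiv ℝ m x (e i) := by
        rw [EuclideanSpace.basisFun_apply]
        exact InnerProductSpace.toDual_symm_apply
      have h2 : (inner ℝ ((EuclideanSpace.basisFun (Fin d) ℝ) i) (gradient p x) : ℝ)
          = fderiv ℝ p x (e i) := by
        rw [real_inner_comm, EuclideanSpace.basisFun_apply]
        exact InnerProductSpace.toDual_symm_apply
      rw [h1, h2]
    rw [htrHdef, Finset.sum_congr rfl (fun i _ => hterm i)]
    rw [Finset.sum_add_distrib, Finset.sum_add_distrib, ← Finset.mul_sum, hlapl, hinner]
    have hcomm : ∑ i, fderiv ℝ p x (e i) * fderiv ℝ m x (e i)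
        = ∑ i, fderiv ℝ m x (e i) * fderiv ℝ p x (e i) :=
      Finset.sum_congr rfl fun i _ => mul_comm _ _
    rw [hcomm]; ring
  -- third derivative bound for G
  set CG : ℝ := 8 * Cm * Cp + |m x| * Cp with hCGdef
  have hCGnn : 0 ≤ CG := by positivity
  have hGbound : ∀ y, ‖iteratedFDeriv ℝ 3 G y‖ ≤ CG := by
    intro y
    have hGsplit : G = (fun y => m y * p y) + fun y => (-(m x)) • p y := by
      funext z
      simp only [hGdef, Pi.add_apply, smul_eq_mul]
      ring
    have hmp : ContDiff ℝ 3 fun y => m y * p y := hm.mul hp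
    have hcp : ContDiff ℝ 3 fun y => (-(m x)) • p y := hp.const_smul _
    have hadd : iteratedFDeriv ℝ 3 G y
        = iteratedFDeriv ℝ 3 (fun y => m y * p y) y
          + iteratedFDeriv ℝ 3 (fun y => (-(m x)) • p y) y := by
      rw [hGsplit]
      exact iteratedFDeriv_add_apply (hmp.of_le (by norm_num)).contDiffAt (hcp.of_le (by norm_num)).contDiffAt
    rw [hadd]
    refine le_trans (norm_add_le _ _) ?_
    have h1 : ‖iteratedFDeriv ℝ 3 (fun y => m y * p y) y‖ ≤ 8 * Cm * Cp := by
      refine le_trans (norm_iteratedFDeriv_mul_le hm hp y (by norm_num)) ?_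
      have hsum : ∀ i ∈ Finset.range 4,
          (Nat.choose 3 i : ℝ) * ‖iteratedFDeriv ℝ i m y‖ * ‖iteratedFDeriv ℝ (3 - i) p y‖
            ≤ (Nat.choose 3 i : ℝ) * Cm * Cp := by
        intro i hi
        have hi3 : i ≤ 3 := Nat.lt_succ_iff.mp (Finset.mem_range.mp hi)
        have := hCm i hi3 y
        have := hCp (3 - i) (Nat.sub_le _ _) y
        gcongr <;> first
          | positivity
          | exact hCm i hi3 y
          | exact hCp (3 - i) (Nat.sub_le _ _) y
          | exact le_trans (norm_nonneg _) (hCp (3 - i) (Nat.sub_le _ _) y)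
      refine le_trans (Finset.sum_le_sum hsum) ?_
      have : ∑ i ∈ Finset.range 4, (Nat.choose 3 i : ℝ) * Cm * Cp
          = (∑ i ∈ Finset.range 4, (Nat.choose 3 i : ℝ)) * Cm * Cp := by
        rw [Finset.sum_mul, Finset.sum_mul]
      rw [this]
      have h8 : ∑ i ∈ Finset.range 4, (Nat.choose 3 i : ℝ) = 8 := by
        simp [Finset.sum_range_succ]
        norm_num
      rw [h8]
    have h2 : ‖iteratedFDeriv ℝ 3 (fun y => (-(m x)) • p y) y‖ ≤ |m x| * Cp := by
      rw [iteratedFDeriv_const_smul_apply' (hp.of_le (by norm_num)).contDiffAt]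
      rw [norm_smul]
      have : ‖-(m x)‖ = |m x| := by rw [norm_neg, Real.norm_eq_abs]
      rw [this]
      exact mul_le_mul_of_nonneg_left (hCp 3 (le_refl _) y) (abs_nonneg _)
    calc _ ≤ 8 * Cm * Cp + |m x| * Cp := add_le_add h1 h2
      _ = CG := rfl
  -- Taylor estimate
  have hTay : ∀ (h : ℝ) (t : EuclideanSpace ℝ (Fin d)),
      |G (x - h • t) + h * fderiv ℝ G x t - h ^ 2 / 2 * Hq t t|
        ≤ CG * (|h| * ‖t‖) ^ 3 := by
    intro h t
    have h0 := taylor_two G hG hGbound x (-(h • t))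
    rw [hHqeq] at h0
    simp only [← sub_eq_add_neg, hGx, map_neg, _root_.map_smul, smul_eq_mul,
      ContinuousLinearMap.neg_apply, ContinuousLinearMap.smul_apply,
      norm_neg, norm_smul, Real.norm_eq_abs] at h0
    have heq : G (x - h • t) + h * fderiv ℝ G x t - h ^ 2 / 2 * Hq t t
        = G (x - h • t) - 0 - -(h * fderiv ℝ G x t)
          - 2⁻¹ * -(h * -(h * Hq t t)) := by ring
    rw [heq]
    exact h0
  -- integrability package
  have haemK : AEStronglyMeasurable Kk volume := hKint.aestronglyMeasurable
  have hKabs3 : Integrable (fun t : EuclideanSpace ℝ (Fin d) => |Kk t| + ‖t‖ ^ 3 * |Kk t|) :=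
    hKint.abs.add hK3
  have hIKt : Integrable (fun t : EuclideanSpace ℝ (Fin d) => Kk t • t) := by
    refine hKabs3.mono' (haemK.smul aestronglyMeasurable_id) (ae_of_all _ fun t => ?_)
    rw [norm_smul, Real.norm_eq_abs]
    calc |Kk t| * ‖t‖ ≤ |Kk t| * (1 + ‖t‖ ^ 3) :=
          mul_le_mul_of_nonneg_left (norm_le_one_add_cube t) (abs_nonneg _)
      _ = |Kk t| + ‖t‖ ^ 3 * |Kk t| := by ring
  have hcont : ∀ h : ℝ, Continuous (fun t : EuclideanSpace ℝ (Fin d) => x - h • t) :=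
    fun h => continuous_const.sub (continuous_id.const_smul h)
  have habsK : ∀ t : EuclideanSpace ℝ (Fin d), |Kk t| * ‖t‖ ≤ |Kk t| + ‖t‖ ^ 3 * |Kk t| := by
    intro t
    calc |Kk t| * ‖t‖ ≤ |Kk t| * (1 + ‖t‖ ^ 3) :=
          mul_le_mul_of_nonneg_left (norm_le_one_add_cube t) (abs_nonneg _)
      _ = |Kk t| + ‖t‖ ^ 3 * |Kk t| := by ring
  have habsK2 : ∀ t : EuclideanSpace ℝ (Fin d), |Kk t| * ‖t‖ ^ 2 ≤ |Kk t| + ‖t‖ ^ 3 * |Kk t| := by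
    intro t
    calc |Kk t| * ‖t‖ ^ 2 ≤ |Kk t| * (1 + ‖t‖ ^ 3) :=
          mul_le_mul_of_nonneg_left (sq_norm_le_one_add_cube t) (abs_nonneg _)
      _ = |Kk t| + ‖t‖ ^ 3 * |Kk t| := by ring
  have hIKp : ∀ h : ℝ, Integrable (fun t : EuclideanSpace ℝ (Fin d) => Kk t * p (x - h • t)) := by
    intro h
    refine (hKint.abs.const_mul Cp).mono'
      (haemK.mul ((hp.continuous.comp (hcont h)).aestronglyMeasurable))
      (ae_of_all _ fun t => ?_)
    rw [Real.norm_eq_abs, abs_mul]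
    calc |Kk t| * |p (x - h • t)| ≤ |Kk t| * Cp :=
          mul_le_mul_of_nonneg_left (hpval _) (abs_nonneg _)
      _ = Cp * |Kk t| := mul_comm _ _
  have hIKmp : ∀ h : ℝ, Integrable
      (fun t : EuclideanSpace ℝ (Fin d) => Kk t * m (x - h • t) * p (x - h • t)) := by
    intro h
    refine (hKint.abs.const_mul (Cm * Cp)).mono'
      ((haemK.mul ((hm.continuous.comp (hcont h)).aestronglyMeasurable)).mul
        ((hp.continuous.comp (hcont h)).aestronglyMeasurable))
      (ae_of_all _ fun t => ?_)
    rw [Real.norm_eq_abs, abs_mul, abs_mul]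
    calc |Kk t| * |m (x - h • t)| * |p (x - h • t)|
        ≤ |Kk t| * Cm * Cp := by
          refine mul_le_mul (mul_le_mul_of_nonneg_left (hmval _) (abs_nonneg _))
            (hpval _) (abs_nonneg _) (mul_nonneg (abs_nonneg _) hCm0)
      _ = Cm * Cp * |Kk t| := by ring
  have hGval : ∀ y, |G y| ≤ (Cm + |m x|) * Cp := by
    intro y
    have h1 : |m y - m x| ≤ Cm + |m x| := by
      rw [sub_eq_add_neg]
      refine le_trans (abs_add_le _ _) ?_
      rw [abs_neg]
      exact add_le_add_left (hmval y) _
    have h2 : |G y| = |m y - m x| * |p y| := by rw [hGdef]; exact abs_mul _ _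
    rw [h2]
    exact mul_le_mul h1 (hpval y) (abs_nonneg _) (by positivity)
  have hIKG : ∀ h : ℝ, Integrable (fun t : EuclideanSpace ℝ (Fin d) => Kk t * G (x - h • t)) := by
    intro h
    refine (hKint.abs.const_mul ((Cm + |m x|) * Cp)).mono'
      (haemK.mul ((hG.continuous.comp (hcont h)).aestronglyMeasurable))
      (ae_of_all _ fun t => ?_)
    rw [Real.norm_eq_abs, abs_mul]
    calc |Kk t| * |G (x - h • t)| ≤ |Kk t| * ((Cm + |m x|) * Cp) :=
          mul_le_mul_of_nonneg_left (hGval _) (abs_nonneg _)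
      _ = (Cm + |m x|) * Cp * |Kk t| := mul_comm _ _
  have hIDG : Integrable (fun t : EuclideanSpace ℝ (Fin d) => Kk t * fderiv ℝ G x t) := by
    refine (hKabs3.const_mul ‖fderiv ℝ G x‖).mono'
      (haemK.mul ((fderiv ℝ G x).continuous.aestronglyMeasurable))
      (ae_of_all _ fun t => ?_)
    rw [Real.norm_eq_abs, abs_mul]
    calc |Kk t| * |fderiv ℝ G x t| ≤ |Kk t| * (‖fderiv ℝ G x‖ * ‖t‖) := by
          refine mul_le_mul_of_nonneg_left ?_ (abs_nonneg _)
          exact (fderiv ℝ G x).le_opNorm t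
      _ = ‖fderiv ℝ G x‖ * (|Kk t| * ‖t‖) := by ring
      _ ≤ ‖fderiv ℝ G x‖ * (|Kk t| + ‖t‖ ^ 3 * |Kk t|) :=
          mul_le_mul_of_nonneg_left (habsK t) (norm_nonneg _)
  have hIHq : Integrable (fun t : EuclideanSpace ℝ (Fin d) => Kk t * Hq t t) := by
    refine (hKabs3.const_mul ‖Hq‖).mono'
      (haemK.mul ((Hq.continuous.clm_apply continuous_id).aestronglyMeasurable))
      (ae_of_all _ fun t => ?_)
    rw [Real.norm_eq_abs, abs_mul]
    calc |Kk t| * |Hq t t| ≤ |Kk t| * (‖Hq‖ * ‖t‖ * ‖t‖) := by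
          refine mul_le_mul_of_nonneg_left ?_ (abs_nonneg _)
          exact Hq.le_opNorm₂ t t
      _ = ‖Hq‖ * (|Kk t| * ‖t‖ ^ 2) := by ring
      _ ≤ ‖Hq‖ * (|Kk t| + ‖t‖ ^ 3 * |Kk t|) :=
          mul_le_mul_of_nonneg_left (habsK2 t) (by positivity)
  have hIij : ∀ i j : Fin d, Integrable
      (fun t : EuclideanSpace ℝ (Fin d) => t i * t j * Kk t) := by
    intro i j
    refine hKabs3.mono'
      ((((EuclideanSpace.proj i).continuous.mul
        (EuclideanSpace.proj j).continuous).aestronglyMeasurable).mul haemK)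
      (ae_of_all _ fun t => ?_)
    rw [Real.norm_eq_abs, abs_mul, abs_mul]
    calc |t i| * |t j| * |Kk t| ≤ ‖t‖ * ‖t‖ * |Kk t| := by
          refine mul_le_mul_of_nonneg_right ?_ (abs_nonneg _)
          exact mul_le_mul (abs_apply_le_norm t i) (abs_apply_le_norm t j)
            (abs_nonneg _) (norm_nonneg t)
      _ = |Kk t| * ‖t‖ ^ 2 := by ring
      _ ≤ |Kk t| + ‖t‖ ^ 3 * |Kk t| := habsK2 t
  -- integral constants
  set I3 : ℝ := ∫ t : EuclideanSpace ℝ (Fin d), ‖t‖ ^ 3 * |Kk t| with hI3def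
  set IA : ℝ := ∫ t : EuclideanSpace ℝ (Fin d), (|Kk t| + ‖t‖ ^ 3 * |Kk t|) with hIAdef
  have hI3nn : 0 ≤ I3 := integral_nonneg fun t => by positivity
  have hIAnn : 0 ≤ IA := integral_nonneg fun t => by positivity
  -- linear term vanishes
  have hDG0 : (∫ t, Kk t * fderiv ℝ G x t) = 0 := by
    have hcomm := (fderiv ℝ G x).integral_comp_comm hIKt
    simp only [_root_.map_smul, smul_eq_mul] at hcomm
    rw [hKsym, map_zero] at hcomm
    exact hcomm
  have hHqsymm : ∀ a b, Hq a b = Hq b a :=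
    second_derivative_symmetric (f := G) (f' := fderiv ℝ G)
      (fun y => ((hG.differentiable (by norm_num)) y).hasFDerivAt) hHqAt
  -- quadratic term
  have hquad : (∫ t, Kk t * Hq t t) = μ2 * trH := by
    have hrepr : ∀ t : EuclideanSpace ℝ (Fin d),
        Kk t * Hq t t = ∑ i, ∑ j, Hq (e i) (e j) * (t i * t j * Kk t) := by
      intro t
      have ht : (∑ i, t i • e i) = t := by
        simp only [hedef]
        exact sum_single_eq_s18 t
      calc Kk t * Hq t t
          = Kk t * Hq (∑ i, t i • e i) (∑ j, t j • e j) := by rw [ht]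
        _ = ∑ i, ∑ j, Hq (e i) (e j) * (t i * t j * Kk t) := by
            simp only [map_sum, ContinuousLinearMap.sum_apply, _root_.map_smul,
              ContinuousLinearMap.smul_apply, smul_eq_mul, Finset.mul_sum,
              Finset.sum_mul]
            refine Finset.sum_congr rfl fun i _ => Finset.sum_congr rfl fun j _ => by
              rw [hHqsymm (e j) (e i)]
              ring
    calc (∫ t, Kk t * Hq t t)
        = ∫ t, ∑ i, ∑ j, Hq (e i) (e j) * (t i * t j * Kk t) :=
          integral_congr_ae (ae_of_all _ hrepr)
      _ = ∑ i, ∫ t, ∑ j, Hq (e i) (e j) * (t i * t j * Kk t) := by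
          refine integral_finset_sum _ fun i _ => ?_
          exact integrable_finset_sum _ fun j _ => (hIij i j).const_mul _
      _ = ∑ i, ∑ j, ∫ t, Hq (e i) (e j) * (t i * t j * Kk t) := by
          refine Finset.sum_congr rfl fun i _ => ?_
          exact integral_finset_sum _ fun j _ => (hIij i j).const_mul _
      _ = ∑ i, ∑ j, Hq (e i) (e j) * (if i = j then μ2 else 0) := by
          refine Finset.sum_congr rfl fun i _ => Finset.sum_congr rfl fun j _ => ?_
          rw [integral_const_mul, hKiso i j]
      _ = μ2 * trH := by
          rw [htrHdef, Finset.mul_sum]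
          refine Finset.sum_congr rfl fun i _ => ?_
          simp [mul_ite, mul_zero, Finset.sum_ite_eq, mul_comm]
  -- the key estimate
  have hstar : ∀ h : ℝ, |(∫ t, Kk t * G (x - h • t)) - h ^ 2 / 2 * (μ2 * trH)|
      ≤ CG * |h| ^ 3 * I3 := by
    intro h
    have hr : Integrable (fun t : EuclideanSpace ℝ (Fin d) =>
        Kk t * (G (x - h • t) + h * fderiv ℝ G x t - h ^ 2 / 2 * Hq t t)) := by
      have heq : (fun t : EuclideanSpace ℝ (Fin d) =>
          Kk t * (G (x - h • t) + h * fderiv ℝ G x t - h ^ 2 / 2 * Hq t t))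
          = fun t => (Kk t * G (x - h • t)) + h * (Kk t * fderiv ℝ G x t)
            - h ^ 2 / 2 * (Kk t * Hq t t) := funext fun t => by ring
      rw [heq]
      exact ((hIKG h).add (hIDG.const_mul h)).sub (hIHq.const_mul (h ^ 2 / 2))
    have hsplit : (∫ t, Kk t * G (x - h • t))
        = (∫ t, Kk t * (G (x - h • t) + h * fderiv ℝ G x t - h ^ 2 / 2 * Hq t t))
          - h * (∫ t, Kk t * fderiv ℝ G x t) + h ^ 2 / 2 * (∫ t, Kk t * Hq t t) := by
      calc (∫ t, Kk t * G (x - h • t))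
          = ∫ t, ((Kk t * (G (x - h • t) + h * fderiv ℝ G x t - h ^ 2 / 2 * Hq t t))
              - h * (Kk t * fderiv ℝ G x t) + h ^ 2 / 2 * (Kk t * Hq t t)) := by
            refine integral_congr_ae (ae_of_all _ fun t => ?_)
            ring
        _ = (∫ t, ((Kk t * (G (x - h • t) + h * fderiv ℝ G x t - h ^ 2 / 2 * Hq t t))
              - h * (Kk t * fderiv ℝ G x t))) + ∫ t, h ^ 2 / 2 * (Kk t * Hq t t) :=
            integral_add (hr.sub (hIDG.const_mul h)) (hIHq.const_mul _)
        _ = (∫ t, Kk t * (G (x - h • t) + h * fderiv ℝ G x t - h ^ 2 / 2 * Hq t t))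
              - (∫ t, h * (Kk t * fderiv ℝ G x t)) + ∫ t, h ^ 2 / 2 * (Kk t * Hq t t) := by
            rw [integral_sub hr (hIDG.const_mul h)]
        _ = _ := by rw [integral_const_mul, integral_const_mul]
    rw [hsplit, hDG0, hquad]
    have heq2 : (∫ t, Kk t * (G (x - h • t) + h * fderiv ℝ G x t - h ^ 2 / 2 * Hq t t))
        - h * 0 + h ^ 2 / 2 * (μ2 * trH) - h ^ 2 / 2 * (μ2 * trH)
        = ∫ t, Kk t * (G (x - h • t) + h * fderiv ℝ G x t - h ^ 2 / 2 * Hq t t) := by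
      ring
    rw [heq2, ← Real.norm_eq_abs]
    have hb3 : ∀ t : EuclideanSpace ℝ (Fin d),
        ‖Kk t * (G (x - h • t) + h * fderiv ℝ G x t - h ^ 2 / 2 * Hq t t)‖
          ≤ CG * |h| ^ 3 * (‖t‖ ^ 3 * |Kk t|) := by
      intro t
      rw [Real.norm_eq_abs, abs_mul]
      calc |Kk t| * |G (x - h • t) + h * fderiv ℝ G x t - h ^ 2 / 2 * Hq t t|
          ≤ |Kk t| * (CG * (|h| * ‖t‖) ^ 3) :=
            mul_le_mul_of_nonneg_left (hTay h t) (abs_nonneg _)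
        _ = CG * |h| ^ 3 * (‖t‖ ^ 3 * |Kk t|) := by ring
    refine le_trans (norm_integral_le_of_norm_le (hK3.const_mul (CG * |h| ^ 3))
      (ae_of_all _ hb3)) ?_
    rw [integral_const_mul]
  -- p is Lipschitz
  have hlip : ∀ a b : EuclideanSpace ℝ (Fin d), |p a - p b| ≤ Cp * ‖a - b‖ := by
    intro a b
    have := (convex_univ :
        Convex ℝ (Set.univ : Set (EuclideanSpace ℝ (Fin d)))).norm_image_sub_le_of_norm_fderiv_le
      (fun y _ => hpd y) (fun y _ => hp1 y) (Set.mem_univ b) (Set.mem_univ a)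
    simpa [Real.norm_eq_abs] using this
  have hBbound : ∀ h : ℝ, |(∫ t, Kk t * p (x - h • t)) - p x| ≤ Cp * |h| * IA := by
    intro h
    have h2 : (∫ t, Kk t * p x) = p x := by
      rw [integral_mul_const, hK1, one_mul]
    have h3 : (∫ t, (Kk t * p (x - h • t) - Kk t * p x))
        = (∫ t, Kk t * p (x - h • t)) - ∫ t, Kk t * p x :=
      integral_sub (hIKp h) (hKint.mul_const (p x))
    have hsub : (∫ t, Kk t * p (x - h • t)) - p x = ∫ t, Kk t * (p (x - h • t) - p x) := by
      calc (∫ t, Kk t * p (x - h • t)) - p x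
          = (∫ t, Kk t * p (x - h • t)) - ∫ t, Kk t * p x := by rw [h2]
        _ = ∫ t, (Kk t * p (x - h • t) - Kk t * p x) := h3.symm
        _ = ∫ t, Kk t * (p (x - h • t) - p x) :=
            integral_congr_ae (ae_of_all _ fun t => by ring)
    rw [hsub, ← Real.norm_eq_abs]
    refine le_trans (norm_integral_le_of_norm_le (hKabs3.const_mul (Cp * |h|))
      (ae_of_all _ fun t => ?_)) ?_
    · rw [Real.norm_eq_abs, abs_mul]
      have hplt : |p (x - h • t) - p x| ≤ Cp * (|h| * ‖t‖) := by
        have h3 := hlip (x - h • t) x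
        have h4 : ‖x - h • t - x‖ = |h| * ‖t‖ := by
          rw [sub_sub_cancel_left, norm_neg, norm_smul, Real.norm_eq_abs]
        rw [h4] at h3
        exact h3
      calc |Kk t| * |p (x - h • t) - p x| ≤ |Kk t| * (Cp * (|h| * ‖t‖)) :=
            mul_le_mul_of_nonneg_left hplt (abs_nonneg _)
        _ = Cp * |h| * (|Kk t| * ‖t‖) := by ring
        _ ≤ Cp * |h| * (|Kk t| + ‖t‖ ^ 3 * |Kk t|) :=
            mul_le_mul_of_nonneg_left (habsK t) (by positivity)
    · rw [integral_const_mul]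
  -- limit of the denominator
  have hB : Tendsto (fun h : ℝ => ∫ t, Kk t * p (x - h • t))
      (nhdsWithin 0 (Set.Ioi 0)) (nhds (p x)) := by
    rw [tendsto_iff_dist_tendsto_zero]
    refine squeeze_zero (g := fun h : ℝ => Cp * |h| * IA) (fun h => dist_nonneg) (fun h => ?_) ?_
    · rw [Real.dist_eq]; exact hBbound h
    · have hcont2 : Tendsto (fun h : ℝ => Cp * |h| * IA) (nhds 0)
          (nhds (Cp * |(0 : ℝ)| * IA)) :=
        Continuous.tendsto (by continuity) 0
      simpa using hcont2.mono_left nhdsWithin_le_nhds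
  -- limit of the numerator
  have hN : Tendsto (fun h : ℝ => (∫ t, Kk t * G (x - h • t)) / h ^ 2)
      (nhdsWithin 0 (Set.Ioi 0)) (nhds (μ2 / 2 * trH)) := by
    rw [tendsto_iff_dist_tendsto_zero]
    refine squeeze_zero' (g := fun h : ℝ => CG * I3 * h) (Eventually.of_forall fun h => dist_nonneg) ?_ ?_
    · filter_upwards [self_mem_nhdsWithin] with h hh
      have hh0 : (0 : ℝ) < h := hh
      rw [Real.dist_eq]
      have h2ne : (h : ℝ) ^ 2 ≠ 0 := ne_of_gt (pow_pos hh0 2)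
      have hcalc : (∫ t, Kk t * G (x - h • t)) / h ^ 2 - μ2 / 2 * trH
          = ((∫ t, Kk t * G (x - h • t)) - h ^ 2 / 2 * (μ2 * trH)) / h ^ 2 := by
        rw [sub_div]
        congr 1
        rw [eq_div_iff h2ne]
        ring
      rw [hcalc, abs_div, abs_of_pos (pow_pos hh0 2)]
      calc |(∫ t, Kk t * G (x - h • t)) - h ^ 2 / 2 * (μ2 * trH)| / h ^ 2
          ≤ (CG * |h| ^ 3 * I3) / h ^ 2 := by
            exact (div_le_div_iff_of_pos_right (pow_pos hh0 2)).mpr (hstar h)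
        _ = CG * I3 * h := by
            rw [abs_of_pos hh0, div_eq_iff h2ne]
            ring
    · have hcont3 : Tendsto (fun h : ℝ => CG * I3 * h) (nhds 0)
          (nhds (CG * I3 * 0)) := Continuous.tendsto (by continuity) 0
      simpa using hcont3.mono_left nhdsWithin_le_nhds
  -- assemble
  have hval : (μ2 / 2 * trH) / p x
      = μ2 / 2 * (lapl m x + 2 * (inner ℝ (gradient m x) (gradient p x) : ℝ) / p x) := by
    rw [htrH]
    field_simp
  have hfinal := hN.div hB (ne_of_gt hx)
  rw [hval] at hfinal
  refine Tendsto.congr' ?_ hfinal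
  filter_upwards [self_mem_nhdsWithin, hB.eventually_ne (ne_of_gt hx)] with h hh hBne
  have hh0 : h ≠ 0 := ne_of_gt hh
  have hAB : (∫ t, Kk t * m (x - h • t) * p (x - h • t))
      - m x * (∫ t, Kk t * p (x - h • t)) = ∫ t, Kk t * G (x - h • t) := by
    rw [← integral_const_mul (m x), ← integral_sub (hIKmp h) ((hIKp h).const_mul (m x))]
    congr 1
    funext t
    rw [hGdef]
    ring
  show ((∫ t, Kk t * G (x - h • t)) / h ^ 2) / (∫ t, Kk t * p (x - h • t))
      = ((∫ t, Kk t * m (x - h • t) * p (x - h • t))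
          / (∫ t, Kk t * p (x - h • t)) - m x) / h ^ 2
  rw [← hAB]
  field_simp
end
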